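/- arXiv:1207.5381 — 2 statements merged into one kernel-verified Lean document; each statement's English description precedes it below -/
import Mathlib

section
/- Let Δ be a banner d-dimensional simplicial pseudomanifold and x a vertex of Δ. Then the subgraph of the 1-skeleton of Δ induced on the set of vertices not in N(x) (i.e., neither x nor adjacent to x) is connected and nonempty. -/
open Finset

variable {V : Type*} [DecidableEq V]

/-- A (finite abstract) simplicial complex: a nonempty, downward closed family of finite
vertex sets (the empty face is always included). -/
def IsComplex (K : Set (Finset V)) : Prop :=
  K.Nonempty ∧ ∀ σ ∈ K, ∀ τ : Finset V, τ ⊆ σ → τ ∈ K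

/-- A facet: a face maximal under inclusion. -/
def IsFacet (K : Set (Finset V)) (F : Finset V) : Prop :=
  F ∈ K ∧ ∀ G ∈ K, F ⊆ G → G = F

/-- PureCplx of dimension `d`: every face is contained in a facet and all facets have `d+1` vertices. -/
def PureCplx (K : Set (Finset V)) (d : ℕ) : Prop :=
  (∀ σ ∈ K, ∃ F, IsFacet K F ∧ σ ⊆ F) ∧ ∀ F, IsFacet K F → F.card = d + 1

def IsVertex (K : Set (Finset V)) (x : V) : Prop := ({x} : Finset V) ∈ K

/-- The 1-skeleton graph of a complex (on the ambient vertex type). -/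
def skeleton (K : Set (Finset V)) : SimpleGraph V where
  Adj x y := x ≠ y ∧ ({x, y} : Finset V) ∈ K
  symm := by
    refine ⟨fun x y h => ?_⟩
    exact ⟨h.1.symm, by rw [Finset.pair_comm]; exact h.2⟩
  loopless := ⟨fun x h => h.1 rfl⟩

/-- A clique of the 1-skeleton of `K`. -/
def IsCliqueIn (K : Set (Finset V)) (T : Finset V) : Prop :=
  ∀ u ∈ T, ∀ v ∈ T, u ≠ v → ({u, v} : Finset V) ∈ K

/-- A critical clique: removing some vertex yields a face. -/
def IsCritical (K : Set (Finset V)) (T : Finset V) : Prop :=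
  ∃ v ∈ T, T.erase v ∈ K

/-- `K` contains the boundary complex of a `(d+1)`-simplex as a subcomplex. -/
def ContainsSimplexBoundary (K : Set (Finset V)) (d : ℕ) : Prop :=
  ∃ S : Finset V, S.card = d + 2 ∧ ∀ τ : Finset V, τ ⊆ S → τ ≠ S → τ ∈ K

/-- Banner (for a pure `d`-complex): every critical `(d+1)`-clique is spanning and no
boundary of a `(d+1)`-simplex occurs as a subcomplex. -/
def Banner (K : Set (Finset V)) (d : ℕ) : Prop :=
  (∀ T : Finset V, IsCliqueIn K T → T.card = d + 1 → IsCritical K T → T ∈ K) ∧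
    ¬ ContainsSimplexBoundary K d

/-- Strongly banner: every `(d+1)`-clique is spanning and no boundary of a `(d+1)`-simplex
occurs as a subcomplex. -/
def StronglyBanner (K : Set (Finset V)) (d : ℕ) : Prop :=
  (∀ T : Finset V, IsCliqueIn K T → T.card = d + 1 → T ∈ K) ∧
    ¬ ContainsSimplexBoundary K d

/-- FlagCplx: every clique of the 1-skeleton is a face. -/
def FlagCplx (K : Set (Finset V)) : Prop :=
  ∀ T : Finset V, IsCliqueIn K T → T ∈ K

/-- The link of a face `σ`. -/
def link (K : Set (Finset V)) (σ : Finset V) : Set (Finset V) :=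
  {τ : Finset V | Disjoint τ σ ∧ τ ∪ σ ∈ K}

/-- The facet graph of a pure `d`-complex: facets adjacent when they share a `(d-1)`-face
(i.e. their intersection has `d` vertices). -/
def facetGraph (K : Set (Finset V)) (d : ℕ) : SimpleGraph {F : Finset V // IsFacet K F} where
  Adj F G := F ≠ G ∧ ((F : Finset V) ∩ (G : Finset V)).card = d
  symm := by
    refine ⟨fun F G h => ?_⟩
    exact ⟨h.1.symm, by rw [Finset.inter_comm]; exact h.2⟩
  loopless := ⟨fun F h => h.1 rfl⟩

/-- Strong connectivity: the facet graph is connected. -/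
def StronglyConnected (K : Set (Finset V)) (d : ℕ) : Prop :=
  (facetGraph K d).Connected

/-- A `d`-dimensional pseudomanifold: pure `d`-complex, every `(d-1)`-face is in exactly
two facets, and the facet graph is connected. -/
def Pseudomanifold (K : Set (Finset V)) (d : ℕ) : Prop :=
  IsComplex K ∧ PureCplx K d ∧
    (∀ σ ∈ K, σ.card = d → {F : Finset V | IsFacet K F ∧ σ ⊆ F}.ncard = 2) ∧
    StronglyConnected K d

/-- Connectivity of a complex: the 1-skeleton induced on its vertex set is connected. -/
def ComplexConnected (K : Set (Finset V)) : Prop :=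
  ((skeleton K).induce {x : V | IsVertex K x}).Connected

/-- A normal pseudomanifold: all links of faces of dimension at least one are connected. -/
def NormalPM (K : Set (Finset V)) (d : ℕ) : Prop :=
  Pseudomanifold K d ∧ ∀ σ ∈ K, σ.card + 1 ≤ d → ComplexConnected (link K σ)

/-- The closed neighborhood `N(x)`: `x` together with its neighbors. -/
def closedNbhd (K : Set (Finset V)) (x : V) : Set V :=
  {x} ∪ {z : V | ({x, z} : Finset V) ∈ K}

/-- The subcomplex induced on a set `A` of vertices. -/
def inducedSub (K : Set (Finset V)) (A : Set V) : Set (Finset V) :=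
  {σ ∈ K | ∀ v ∈ σ, v ∈ A}

/-- The antistar of a vertex: the induced subcomplex on all other vertices. -/
def antistar (K : Set (Finset V)) (x : V) : Set (Finset V) :=
  {σ ∈ K | x ∉ σ}

/-- `K` is the boundary of a triangle, i.e. the 3-cycle `C₃`. -/
def IsC3 (K : Set (Finset V)) : Prop :=
  ∃ a b c : V, a ≠ b ∧ a ≠ c ∧ b ≠ c ∧
    K = {τ : Finset V | τ ⊆ ({a, b, c} : Finset V) ∧ τ ≠ ({a, b, c} : Finset V)}

/-- The banner number of a pure `d`-complex. -/
noncomputable def bannerNumber (K : Set (Finset V)) (d : ℕ) : ℕ :=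
  sInf {j : ℕ | ∀ σ ∈ K, σ.card = j → Banner (link K σ) (d - j) ∨ IsC3 (link K σ)}

/-- `k`-connectivity of a graph: more than `k` vertices, and removing fewer than `k`
vertices leaves it connected. -/
def KConnected {W : Type*} [Fintype W] [DecidableEq W] (G : SimpleGraph W) (k : ℕ) : Prop :=
  k < Fintype.card W ∧
    ∀ S : Finset W, S.card < k → (G.induce ((↑S : Set W)ᶜ)).Connected

/-- Existence of `k` pairwise independent `u`–`v` paths: paths sharing no vertices other
than `u` and `v`. -/
def IndepPaths {W : Type*} (G : SimpleGraph W) (u v : W) (k : ℕ) : Prop :=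
  ∃ p : Fin k → G.Walk u v, (∀ i, (p i).IsPath) ∧
    ∀ i j, i ≠ j → ∀ w : W, w ∈ (p i).support → w ∈ (p j).support → w = u ∨ w = v

section Parity

variable {W : Type*} [Fintype W] [DecidableEq W]

private lemma parity_aux {G : SimpleGraph W}
    (hdeg : ∀ v w, G.Adj v w → ∃ a b, a ≠ b ∧ ∀ c, G.Adj v c ↔ (c = a ∨ c = b))
    {x f g : W} (hxf : G.Adj x f) (hxg : G.Adj x g) (hfg : f ≠ g) :
    Relation.ReflTransGen (fun a b => G.Adj a b ∧ a ≠ x ∧ b ≠ x) f g := by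
  classical
  by_contra hcon
  set R : W → W → Prop := fun a b => G.Adj a b ∧ a ≠ x ∧ b ≠ x with hR
  -- neighbors of x are exactly f and g
  have hxnbr : ∀ c, G.Adj x c → c = f ∨ c = g := by
    obtain ⟨a, b, hab, hch⟩ := hdeg x f hxf
    rcases (hch f).mp hxf with rfl | rfl <;> rcases (hch g).mp hxg with rfl | rfl
    · exact absurd rfl hfg
    · intro c hc; exact (hch c).mp hc
    · intro c hc; exact ((hch c).mp hc).symm
    · exact absurd rfl hfg
  have hfx : f ≠ x := fun h => G.loopless.irrefl x (h ▸ hxf)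
  have hgx : g ≠ x := fun h => G.loopless.irrefl x (h ▸ hxg)
  have hxS : ¬ Relation.ReflTransGen R f x := by
    intro h
    rcases Relation.ReflTransGen.cases_tail h with h' | ⟨c, _, hcx⟩
    · exact hfx h'.symm
    · exact hcx.2.2 rfl
  have hSne : ∀ v, Relation.ReflTransGen R f v → v ≠ x := by
    rintro v hv rfl; exact hxS hv
  -- the auxiliary graph: edges of G within the component of f avoiding x
  set G'' : SimpleGraph W :=
    { Adj := fun a b => G.Adj a b ∧ a ≠ x ∧ b ≠ x ∧
        Relation.ReflTransGen R f a ∧ Relation.ReflTransGen R f b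
      symm := ⟨by rintro a b ⟨h1, h2, h3, h4, h5⟩; exact ⟨h1.symm, h3, h2, h5, h4⟩⟩
      loopless := ⟨fun a h => G.loopless.irrefl a h.1⟩ } with hG''
  haveI : DecidableRel G''.Adj := fun a b => Classical.dec _
  have hdeg0 : ∀ v, ¬ Relation.ReflTransGen R f v → G''.degree v = 0 := by
    intro v hv
    rw [SimpleGraph.degree, Finset.card_eq_zero]
    ext c
    simp only [SimpleGraph.mem_neighborFinset, Finset.notMem_empty, iff_false, hG'']
    rintro ⟨_, _, _, h4, _⟩; exact hv h4
  have hdeg2 : ∀ v, Relation.ReflTransGen R f v → v ≠ f → G''.degree v = 2 := by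
    intro v hv hvf
    obtain ⟨u, hu⟩ : ∃ u, G.Adj v u := by
      rcases Relation.ReflTransGen.cases_tail hv with h' | ⟨c, _, hcv⟩
      · exact absurd h' hvf
      · exact ⟨c, hcv.1.symm⟩
    obtain ⟨a, b, hab, hch⟩ := hdeg v u hu
    have hnb : G''.neighborFinset v = {a, b} := by
      ext c
      simp only [SimpleGraph.mem_neighborFinset, Finset.mem_insert, Finset.mem_singleton, hG'']
      constructor
      · rintro ⟨h1, _⟩; exact (hch c).mp h1
      · intro hc
        have hadj : G.Adj v c := (hch c).mpr hc
        have hcx : c ≠ x := by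
          rintro rfl
          rcases hxnbr v hadj.symm with rfl | rfl
          · exact hvf rfl
          · exact hcon hv
        exact ⟨hadj, hSne v hv, hcx, hv, hv.tail ⟨hadj, hSne v hv, hcx⟩⟩
    rw [SimpleGraph.degree, hnb, Finset.card_pair hab]
  have hdeg1 : G''.degree f = 1 := by
    obtain ⟨a, b, hab, hch⟩ := hdeg f x hxf.symm
    obtain ⟨z, hzx, hchz⟩ : ∃ z, z ≠ x ∧ ∀ c, G.Adj f c ↔ (c = x ∨ c = z) := by
      rcases (hch x).mp hxf.symm with h | h
      · exact ⟨b, fun hbx => hab (hbx.trans h).symm, fun c => by rw [hch c, h]⟩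
      · exact ⟨a, fun hax => hab (hax.trans h), fun c => (hch c).trans (by rw [h]; exact or_comm)⟩
    have hnb : G''.neighborFinset f = {z} := by
      ext c
      simp only [SimpleGraph.mem_neighborFinset, Finset.mem_singleton, hG'']
      constructor
      · rintro ⟨h1, _, h3, _⟩
        rcases (hchz c).mp h1 with rfl | rfl
        · exact absurd rfl h3
        · rfl
      · intro hc
        have hadj : G.Adj f c := (hchz c).mpr (Or.inr hc)
        have hcx : c ≠ x := fun h => hzx (hc ▸ h)
        exact ⟨hadj, hfx, hcx, Relation.ReflTransGen.refl,
          Relation.ReflTransGen.refl.tail ⟨hadj, hfx, hcx⟩⟩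
    rw [SimpleGraph.degree, hnb, Finset.card_singleton]
  -- handshake contradiction
  have hsum := G''.sum_degrees_eq_twice_card_edges
  set T : Finset W := Finset.univ.filter (fun v => Relation.ReflTransGen R f v) with hT
  have hfT : f ∈ T := by
    simp only [hT, Finset.mem_filter, Finset.mem_univ, true_and]
    exact Relation.ReflTransGen.refl
  have h1 : ∑ v ∈ T, G''.degree v = ∑ v : W, G''.degree v := by
    apply Finset.sum_subset (Finset.subset_univ T)
    intro v _ hv
    refine hdeg0 v ?_
    intro h; exact hv (by simp [hT, h])
  have h2 : ∑ v ∈ T.erase f, G''.degree v = 2 * (T.erase f).card := by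
    rw [Finset.sum_congr rfl (fun v hv => ?_), Finset.sum_const, smul_eq_mul, Nat.mul_comm]
    have hvT := Finset.mem_of_mem_erase hv
    exact hdeg2 v (by simpa [hT] using hvT) (Finset.ne_of_mem_erase hv)
  have h3 : G''.degree f + ∑ v ∈ T.erase f, G''.degree v = ∑ v ∈ T, G''.degree v :=
    Finset.add_sum_erase T (fun v => G''.degree v) hfT
  rw [hdeg1] at h3
  omega

end Parity
section PM

variable {V : Type*} [DecidableEq V] {K : Set (Finset V)} {d : ℕ} {x : V}

private lemma mem_of_face_subset (hpm : Pseudomanifold K d) {σ τ : Finset V}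
    (h : σ ∈ K) (hts : τ ⊆ σ) : τ ∈ K := hpm.1.2 σ h τ hts

private lemma facet_card (hpm : Pseudomanifold K d) {F : Finset V} (hF : IsFacet K F) :
    F.card = d + 1 := hpm.2.1.2 F hF

private lemma exists_facet_ext (hpm : Pseudomanifold K d) {σ : Finset V} (hσ : σ ∈ K) :
    ∃ F, IsFacet K F ∧ σ ⊆ F := hpm.2.1.1 σ hσ

private lemma two_facets (hpm : Pseudomanifold K d) {σ : Finset V} (hσ : σ ∈ K)
    (hc : σ.card = d) :
    ∃ A B : Finset V, A ≠ B ∧ IsFacet K A ∧ IsFacet K B ∧ σ ⊆ A ∧ σ ⊆ B ∧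
      ∀ H, IsFacet K H → σ ⊆ H → H = A ∨ H = B := by
  obtain ⟨A, B, hab, hset⟩ := Set.ncard_eq_two.mp (hpm.2.2.1 σ hσ hc)
  have hmem : ∀ H : Finset V, (IsFacet K H ∧ σ ⊆ H) ↔ (H = A ∨ H = B) := by
    intro H
    constructor
    · intro h
      have : H ∈ ({F : Finset V | IsFacet K F ∧ σ ⊆ F}) := h
      rw [hset] at this
      exact this
    · intro h
      have : H ∈ ({A, B} : Set (Finset V)) := h
      rw [← hset] at this
      exact this
  have hA := (hmem A).mpr (Or.inl rfl)
  have hB := (hmem B).mpr (Or.inr rfl)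
  exact ⟨A, B, hab, hA.1, hB.1, hA.2, hB.2, fun H h1 h2 => (hmem H).mp ⟨h1, h2⟩⟩

private lemma pigeon (hpm : Pseudomanifold K d) {σ : Finset V} (hσ : σ ∈ K)
    (hc : σ.card = d) {P Q R' : Finset V}
    (hP : IsFacet K P) (hQ : IsFacet K Q) (hR : IsFacet K R')
    (hsP : σ ⊆ P) (hsQ : σ ⊆ Q) (hsR : σ ⊆ R')
    (hPR : P ≠ R') (hQR : Q ≠ R') : P = Q := by
  obtain ⟨A, B, hab, _, _, _, _, hall⟩ := two_facets hpm hσ hc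
  rcases hall P hP hsP with rfl | rfl <;> rcases hall Q hQ hsQ with rfl | rfl <;>
      rcases hall R' hR hsR with rfl | rfl <;>
    first
      | rfl
      | exact absurd rfl hPR
      | exact absurd rfl hQR
      | exact absurd rfl hab
      | exact absurd rfl hab.symm

private lemma unique_d_subset {F S : Finset V} (hxF : x ∈ F) (hS : S ⊆ F) (hx : x ∉ S)
    (hcS : S.card = d) (hcF : F.card = d + 1) : S = F.erase x := by
  apply Finset.eq_of_subset_of_card_le
  · intro s hs
    exact Finset.mem_erase.mpr ⟨fun h => hx (h ▸ hs), hS hs⟩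
  · rw [Finset.card_erase_of_mem hxF, hcF, hcS]
    omega

private lemma mem_closedNbhd_iff {z : V} :
    z ∈ closedNbhd K x ↔ z = x ∨ ({x, z} : Finset V) ∈ K := by
  simp [closedNbhd]

private lemma insert_face (hpm : Pseudomanifold K d) (hb : Banner K d) {σ : Finset V}
    (hσ : σ ∈ K) (hcσ : σ.card = d) (hx : x ∉ σ)
    (hadj : ∀ v ∈ σ, ({x, v} : Finset V) ∈ K) : insert x σ ∈ K := by
  apply hb.1
  · intro u hu v hv huv
    rcases Finset.mem_insert.mp hu with rfl | hu' <;> rcases Finset.mem_insert.mp hv with rfl | hv'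
    · exact absurd rfl huv
    · exact hadj v hv'
    · rw [Finset.pair_comm]; exact hadj u hu'
    · refine mem_of_face_subset hpm hσ ?_
      intro t ht
      rcases Finset.mem_insert.mp ht with rfl | ht'
      · exact hu'
      · rwa [Finset.mem_singleton.mp ht']
  · rw [Finset.card_insert_of_notMem hx, hcσ]
  · exact ⟨x, Finset.mem_insert_self x σ, by rwa [Finset.erase_insert hx]⟩

private lemma exists_antistar_facet (hpm : Pseudomanifold K d) (hx : ({x} : Finset V) ∈ K) :
    ∃ G, IsFacet K G ∧ x ∉ G := by
  obtain ⟨F, hF, hsub⟩ := exists_facet_ext hpm hx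
  have hxF : x ∈ F := hsub (Finset.mem_singleton_self x)
  have hσK : F.erase x ∈ K := mem_of_face_subset hpm hF.1 (Finset.erase_subset x F)
  have hσc : (F.erase x).card = d := by
    rw [Finset.card_erase_of_mem hxF, facet_card hpm hF]
    omega
  have key : ∀ C, IsFacet K C → F.erase x ⊆ C → x ∈ C → C = F := by
    intro C hC hsC hxC
    have : F ⊆ C := by
      intro t ht
      by_cases htx : t = x
      · rwa [htx]
      · exact hsC (Finset.mem_erase.mpr ⟨htx, ht⟩)
    exact hF.2 C hC.1 this
  obtain ⟨A, B, hab, hA, hB, hsA, hsB, _⟩ := two_facets hpm hσK hσc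
  by_cases hxA : x ∈ A
  · refine ⟨B, hB, fun hxB => ?_⟩
    exact hab ((key A hA hsA hxA).trans (key B hB hsB hxB).symm)
  · exact ⟨A, hA, hxA⟩

private lemma facet_outside (hpm : Pseudomanifold K d) (hb : Banner K d) {F : Finset V}
    (hF : IsFacet K F) (hxF : x ∉ F) : ∃ z ∈ F, z ∉ closedNbhd K x := by
  by_contra hcon
  push_neg at hcon
  have hadj : ∀ v ∈ F, ({x, v} : Finset V) ∈ K := by
    intro v hv
    rcases mem_closedNbhd_iff.mp (hcon v hv) with rfl | h
    · exact absurd hv hxF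
    · exact h
  apply hb.2
  refine ⟨insert x F, ?_, ?_⟩
  · rw [Finset.card_insert_of_notMem hxF, facet_card hpm hF]
  · intro τ hτs hτne
    obtain ⟨v, hvS, hvτ⟩ := Finset.exists_of_ssubset (Finset.ssubset_iff_subset_ne.mpr ⟨hτs, hτne⟩)
    by_cases hvx : v = x
    · subst hvx
      refine mem_of_face_subset hpm hF.1 (fun t ht => ?_)
      rcases Finset.mem_insert.mp (hτs ht) with rfl | h
      · exact absurd ht hvτ
      · exact h
    · have hvF : v ∈ F := by
        rcases Finset.mem_insert.mp hvS with rfl | h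
        · exact absurd rfl hvx
        · exact h
      have hT : insert x (F.erase v) ∈ K := by
        refine insert_face hpm hb
          (mem_of_face_subset hpm hF.1 (Finset.erase_subset v F)) ?_
          (fun h => hxF (Finset.mem_of_mem_erase h))
          (fun w hw => hadj w (Finset.mem_of_mem_erase hw))
        rw [Finset.card_erase_of_mem hvF, facet_card hpm hF]
        omega
      refine hpm.1.2 _ hT τ (fun t ht => ?_)
      have htv : t ≠ v := fun h => hvτ (h ▸ ht)
      rcases Finset.mem_insert.mp (hτs ht) with rfl | h
      · exact Finset.mem_insert_self _ _
      · exact Finset.mem_insert_of_mem (Finset.mem_erase.mpr ⟨htv, h⟩)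

private lemma shared_outside (hpm : Pseudomanifold K d) (hb : Banner K d) {F G : Finset V}
    (hF : IsFacet K F) (hG : IsFacet K G) (hxF : x ∉ F) (hxG : x ∉ G)
    (hcard : (F ∩ G).card = d) : ∃ z ∈ F ∩ G, z ∉ closedNbhd K x := by
  by_contra hcon
  push_neg at hcon
  have hσK : F ∩ G ∈ K := mem_of_face_subset hpm hF.1 Finset.inter_subset_left
  have hxσ : x ∉ F ∩ G := fun h => hxF (Finset.mem_of_mem_inter_left h)
  have hadj : ∀ v ∈ F ∩ G, ({x, v} : Finset V) ∈ K := by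
    intro v hv
    rcases mem_closedNbhd_iff.mp (hcon v hv) with rfl | h
    · exact absurd hv hxσ
    · exact h
  have hT : insert x (F ∩ G) ∈ K := insert_face hpm hb hσK hcard hxσ hadj
  obtain ⟨H, hH, hsH⟩ := exists_facet_ext hpm hT
  have hTH : insert x (F ∩ G) = H := by
    apply Finset.eq_of_subset_of_card_le hsH
    rw [facet_card hpm hH, Finset.card_insert_of_notMem hxσ, hcard]
  have hTfacet : IsFacet K (insert x (F ∩ G)) := hTH ▸ hH
  have hFG : F ≠ G := by
    rintro rfl
    rw [Finset.inter_self, facet_card hpm hF] at hcard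
    omega
  have hTF : F ≠ insert x (F ∩ G) := fun h => hxF (h ▸ Finset.mem_insert_self x _)
  have hTG : G ≠ insert x (F ∩ G) := fun h => hxG (h ▸ Finset.mem_insert_self x _)
  exact hFG (pigeon hpm hσK hcard hF hG hTfacet Finset.inter_subset_left
    Finset.inter_subset_right (Finset.subset_insert x _) hTF hTG)

end PM
section Star

variable {V : Type*} [DecidableEq V] {K : Set (Finset V)} {d : ℕ} {x : V}

/-- The antistar facet adjacency relation. -/
private def AntiRel (K : Set (Finset V)) (d : ℕ) (x : V) : Finset V → Finset V → Prop :=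
  fun P Q => IsFacet K P ∧ IsFacet K Q ∧ x ∉ P ∧ x ∉ Q ∧ (P ∩ Q).card = d

private lemma union_singleton' (s : Finset V) (a : V) : s ∪ {a} = insert a s := by
  ext t
  simp [or_comm]

private lemma union_pair_card {π : Finset V} {k : ℕ} (hπ : π.card = k) (v w : V)
    (h1 : v ≠ w) (h2 : v ∉ π) (h3 : w ∉ π) : (π ∪ {v, w}).card = k + 2 := by
  rw [show ({v, w} : Finset V) = insert v {w} from rfl, Finset.union_insert,
    union_singleton' _ _, Finset.card_insert_of_notMem, Finset.card_insert_of_notMem h3, hπ]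
  rw [Finset.mem_insert]
  push_neg
  exact ⟨h1, h2⟩

private lemma union_single_card {π : Finset V} {k : ℕ} (hπ : π.card = k) (v : V)
    (h2 : v ∉ π) : (π ∪ {v}).card = k + 1 := by
  rw [union_singleton' _ _, Finset.card_insert_of_notMem h2, hπ]

private lemma starStarLift [Fintype V] (hpm : Pseudomanifold K d) {H H' A A' : Finset V}
    (hH : IsFacet K H) (hH' : IsFacet K H') (hxH : x ∈ H) (hxH' : x ∈ H')
    (hne : H ≠ H') (hcard : (H ∩ H').card = d)
    (hA : IsFacet K A) (hA' : IsFacet K A') (hxA : x ∉ A) (hxA' : x ∉ A')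
    (hsA : H.erase x ⊆ A) (hsA' : H'.erase x ⊆ A') :
    Relation.ReflTransGen (AntiRel K d x) A A' := by
  classical
  set ρ := H ∩ H' with hρ
  have hxρ : x ∈ ρ := Finset.mem_inter.mpr ⟨hxH, hxH'⟩
  set π := ρ.erase x with hπ
  have hρK : ρ ∈ K := mem_of_face_subset hpm hH.1 Finset.inter_subset_left
  have hπK : π ∈ K := mem_of_face_subset hpm hρK (Finset.erase_subset x ρ)
  have hπc : π.card + 1 = d := by
    have h1 : 0 < ρ.card := Finset.card_pos.mpr ⟨x, hxρ⟩
    rw [hπ, Finset.card_erase_of_mem hxρ, hcard]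
    rw [hcard] at h1
    omega
  have hxπ : x ∉ π := Finset.notMem_erase x ρ
  have hρeq : ρ = insert x π := (Finset.insert_erase hxρ).symm
  -- the unique extra vertices f, g of H, H' over ρ
  have extra : ∀ {C : Finset V}, IsFacet K C → ρ ⊆ C →
      ∃ f, f ∉ ρ ∧ f ∈ C ∧ C = ρ ∪ {f} := by
    intro C hC hsC
    obtain ⟨f, hf⟩ : ∃ f, C \ ρ = {f} := Finset.card_eq_one.mp
      (by rw [Finset.card_sdiff_of_subset hsC, facet_card hpm hC, hcard]; omega)
    have hfm : f ∈ C \ ρ := by rw [hf]; exact Finset.mem_singleton_self f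
    have h1 := Finset.mem_sdiff.mp hfm
    exact ⟨f, h1.2, h1.1, by rw [← hf, Finset.union_sdiff_of_subset hsC]⟩
  obtain ⟨f, hfρ, hfH, hHeq⟩ := extra hH Finset.inter_subset_left
  obtain ⟨g, hgρ, hgH', hH'eq⟩ := extra hH' Finset.inter_subset_right
  have hfx : f ≠ x := fun h => hfρ (h ▸ hxρ)
  have hgx : g ≠ x := fun h => hgρ (h ▸ hxρ)
  have hfπ : f ∉ π := fun h => hfρ (Finset.erase_subset x ρ h)
  have hgπ : g ∉ π := fun h => hgρ (Finset.erase_subset x ρ h)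
  have hfg : f ≠ g := by
    rintro rfl
    exact hne (by rw [hHeq, hH'eq])
  have hHe : H.erase x = π ∪ {f} := by
    rw [hHeq, Finset.erase_union_distrib,
      Finset.erase_eq_of_notMem (Finset.notMem_singleton.mpr (Ne.symm hfx))]
  have hH'e : H'.erase x = π ∪ {g} := by
    rw [hH'eq, Finset.erase_union_distrib,
      Finset.erase_eq_of_notMem (Finset.notMem_singleton.mpr (Ne.symm hgx))]
  have hunionx : ∀ w : V, w ≠ x → π ∪ {x, w} = insert x (π ∪ {w}) := by
    intro w _
    rw [show ({x, w} : Finset V) = insert x {w} from rfl, Finset.union_insert]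
  -- the local link graph
  set L : SimpleGraph V :=
    { Adj := fun v w => v ≠ w ∧ v ∉ π ∧ w ∉ π ∧ IsFacet K (π ∪ {v, w})
      symm := ⟨by
        rintro v w ⟨h1, h2, h3, h4⟩
        exact ⟨h1.symm, h3, h2, by rwa [Finset.pair_comm w v]⟩⟩
      loopless := ⟨fun v h => h.1 rfl⟩ } with hL
  have hLAdj : ∀ v w : V, L.Adj v w ↔
      (v ≠ w ∧ v ∉ π ∧ w ∉ π ∧ IsFacet K (π ∪ {v, w})) := fun v w => Iff.rfl
  -- degree-two property
  have hdegL : ∀ v w, L.Adj v w → ∃ a b, a ≠ b ∧ ∀ c, L.Adj v c ↔ (c = a ∨ c = b) := by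
    intro v w hvw
    obtain ⟨hvwne, hvπ, hwπ, hfacet⟩ := (hLAdj v w).mp hvw
    have hpair : ∀ c : V, c ≠ v → ({v} : Finset V) ⊆ {v, c} :=
      fun c _ => Finset.singleton_subset_iff.mpr (Finset.mem_insert_self v {c})
    have hτK : π ∪ {v} ∈ K := mem_of_face_subset hpm hfacet.1
      (Finset.union_subset_union_right (hpair w (Ne.symm hvwne)))
    have hτc : (π ∪ {v}).card = d := by
      rw [union_single_card rfl v hvπ]
      omega
    obtain ⟨P, Q, hPQ, hPf, hQf, hsP, hsQ, hall⟩ := two_facets hpm hτK hτc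
    have extra2 : ∀ {C : Finset V}, IsFacet K C → π ∪ {v} ⊆ C →
        ∃ a, a ∉ π ∧ a ≠ v ∧ C = π ∪ {v, a} := by
      intro C hC hsC
      obtain ⟨a, ha⟩ : ∃ a, C \ (π ∪ {v}) = {a} := Finset.card_eq_one.mp
        (by rw [Finset.card_sdiff_of_subset hsC, facet_card hpm hC, hτc]; omega)
      have ham : a ∈ C \ (π ∪ {v}) := by rw [ha]; exact Finset.mem_singleton_self a
      have h1 := Finset.mem_sdiff.mp ham
      refine ⟨a, fun h => h1.2 (Finset.mem_union_left _ h),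
        fun h => h1.2 (Finset.mem_union_right _ (by rw [h]; exact Finset.mem_singleton_self v)),
        ?_⟩
      have hCeq : C = (π ∪ {v}) ∪ {a} := by rw [← ha, Finset.union_sdiff_of_subset hsC]
      rw [hCeq, Finset.union_assoc]
      congr 1
    obtain ⟨a, haπ, hav, hPa⟩ := extra2 hPf hsP
    obtain ⟨b, hbπ, hbv, hQb⟩ := extra2 hQf hsQ
    have hab : a ≠ b := by
      rintro rfl
      exact hPQ (by rw [hPa, hQb])
    refine ⟨a, b, hab, fun c => ⟨?_, ?_⟩⟩
    · intro hvc
      obtain ⟨hvcne, _, hcπ, hfc⟩ := (hLAdj v c).mp hvc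
      have hmem : π ∪ {v, c} = P ∨ π ∪ {v, c} = Q :=
        hall _ hfc (Finset.union_subset_union_right (hpair c (Ne.symm hvcne)))
      have hcin : c ∈ π ∪ ({v, c} : Finset V) :=
        Finset.mem_union_right _ (Finset.mem_insert_of_mem (Finset.mem_singleton_self c))
      rcases hmem with h | h
      · left
        rw [h, hPa] at hcin
        rcases Finset.mem_union.mp hcin with h' | h'
        · exact absurd h' hcπ
        · rcases Finset.mem_insert.mp h' with h'' | h''
          · exact absurd h'' (Ne.symm hvcne)
          · exact Finset.mem_singleton.mp h''
      · right
        rw [h, hQb] at hcin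
        rcases Finset.mem_union.mp hcin with h' | h'
        · exact absurd h' hcπ
        · rcases Finset.mem_insert.mp h' with h'' | h''
          · exact absurd h'' (Ne.symm hvcne)
          · exact Finset.mem_singleton.mp h''
    · rintro (rfl | rfl)
      · exact (hLAdj v c).mpr ⟨Ne.symm hav, hvπ, haπ, by rw [← hPa]; exact hPf⟩
      · exact (hLAdj v c).mpr ⟨Ne.symm hbv, hvπ, hbπ, by rw [← hQb]; exact hQf⟩
  -- x's neighbors in L are f and g, via H and H'
  have hLxf : L.Adj x f := by
    refine (hLAdj x f).mpr ⟨Ne.symm hfx, hxπ, hfπ, ?_⟩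
    have : π ∪ ({x, f} : Finset V) = H := by
      rw [hunionx f hfx, ← Finset.insert_union, ← hρeq, ← hHeq]
    rwa [this]
  have hLxg : L.Adj x g := by
    refine (hLAdj x g).mpr ⟨Ne.symm hgx, hxπ, hgπ, ?_⟩
    have : π ∪ ({x, g} : Finset V) = H' := by
      rw [hunionx g hgx, ← Finset.insert_union, ← hρeq, ← hH'eq]
    rwa [this]
  have hchain := parity_aux hdegL hLxf hLxg hfg
  -- A' is the unique antistar facet over π ∪ {g}
  have hπgc : (π ∪ {g}).card = d := by rw [union_single_card rfl g hgπ]; omega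
  have hπgK : π ∪ {g} ∈ K := by
    refine mem_of_face_subset hpm hH'.1 (Finset.union_subset ?_ ?_)
    · exact fun t ht => Finset.inter_subset_right (Finset.erase_subset x ρ ht)
    · exact Finset.singleton_subset_iff.mpr hgH'
  have hsA'g : π ∪ {g} ⊆ A' := by rw [← hH'e]; exact hsA'
  have hsH'g : π ∪ {g} ⊆ H' := by rw [← hH'e]; exact Finset.erase_subset x H'
  have ident : ∀ C, IsFacet K C → x ∉ C → π ∪ {g} ⊆ C → C = A' := by
    intro C hC hxC hsC
    exact pigeon hpm hπgK hπgc hC hA' hH' hsC hsA'g hsH'g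
      (fun h => hxC (h ▸ hxH')) (fun h => hxA' (h ▸ hxH'))
  -- lift the chain in L to a chain of antistar facets
  have hlift : ∀ a : V, Relation.ReflTransGen (fun a b => L.Adj a b ∧ a ≠ x ∧ b ≠ x) a g →
      ∀ C, IsFacet K C → x ∉ C → π ∪ {a} ⊆ C →
        Relation.ReflTransGen (AntiRel K d x) C A' := by
    intro a ha
    induction ha using Relation.ReflTransGen.head_induction_on with
    | refl =>
      intro C hC hxC hsC
      rw [ident C hC hxC hsC]
    | @head a c hac hcg ih =>
      intro C hC hxC hsC
      obtain ⟨hadj, hax, hcx⟩ := hac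
      obtain ⟨hacne, haπ2, hcπ2, hfacP⟩ := (hLAdj a c).mp hadj
      have hxP₁ : x ∉ π ∪ ({a, c} : Finset V) := by
        intro hmem
        rcases Finset.mem_union.mp hmem with h | h
        · exact hxπ h
        · rcases Finset.mem_insert.mp h with h' | h'
          · exact hax h'.symm
          · exact hcx (Finset.mem_singleton.mp h').symm
      have hsubc : π ∪ {c} ⊆ π ∪ ({a, c} : Finset V) :=
        Finset.union_subset_union_right (Finset.singleton_subset_iff.mpr
          (Finset.mem_insert_of_mem (Finset.mem_singleton_self c)))
      have hreach := ih (π ∪ {a, c}) hfacP hxP₁ hsubc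
      by_cases hCeq : C = π ∪ {a, c}
      · rwa [hCeq]
      · refine Relation.ReflTransGen.head ⟨hC, hfacP, hxC, hxP₁, ?_⟩ hreach
        have hsub1 : π ∪ {a} ⊆ C ∩ (π ∪ {a, c}) :=
          Finset.subset_inter hsC (Finset.union_subset_union_right
            (Finset.singleton_subset_iff.mpr (Finset.mem_insert_self a {c})))
        have hle : d ≤ (C ∩ (π ∪ {a, c})).card := by
          have := Finset.card_le_card hsub1
          rwa [union_single_card rfl a haπ2, hπc] at this
        have hub : (C ∩ (π ∪ {a, c})).card ≤ d + 1 := by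
          have := Finset.card_le_card (Finset.inter_subset_left (s₁ := C) (s₂ := π ∪ {a, c}))
          rwa [facet_card hpm hC] at this
        have hneq : (C ∩ (π ∪ {a, c})).card ≠ d + 1 := by
          intro h
          have heq : C ∩ (π ∪ {a, c}) = C := by
            apply Finset.eq_of_subset_of_card_le Finset.inter_subset_left
            rw [h, facet_card hpm hC]
          have hCsub : C ⊆ π ∪ {a, c} := heq ▸ Finset.inter_subset_right
          exact hCeq (hC.2 _ hfacP.1 hCsub).symm
        omega
  refine hlift f hchain A hA hxA ?_
  rw [← hHe]; exact hsA

end Star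
section MainProof

variable {V : Type*} [DecidableEq V] {K : Set (Finset V)} {d : ℕ} {x : V}

private def Anchor (K : Set (Finset V)) (x : V) (H A : Finset V) : Prop :=
  IsFacet K A ∧ x ∉ A ∧ (A = H ∨ (H.erase x ⊆ A ∧ A ≠ H))

private lemma erase_card_of_facet (hpm : Pseudomanifold K d) {H : Finset V}
    (hH : IsFacet K H) (hx : x ∈ H) : (H.erase x).card = d := by
  rw [Finset.card_erase_of_mem hx, facet_card hpm hH]
  omega

private lemma anchor_id {H A : Finset V} (hH : IsFacet K H) (hx : x ∉ H)
    (h : Anchor K x H A) : A = H := by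
  rcases h.2.2 with rfl | ⟨hs, hne⟩
  · rfl
  · rw [Finset.erase_eq_of_notMem hx] at hs
    exact absurd (hH.2 A h.1.1 hs) hne

private lemma sub_of_erase_sub {H C : Finset V} (hxC : x ∈ C) (hs : H.erase x ⊆ C) :
    H ⊆ C := by
  intro t ht
  by_cases htx : t = x
  · rwa [htx]
  · exact hs (Finset.mem_erase.mpr ⟨htx, ht⟩)

private lemma anchor_exists (hpm : Pseudomanifold K d) {H : Finset V} (hH : IsFacet K H) :
    ∃ A, Anchor K x H A := by
  by_cases hx : x ∈ H
  · have hσK : H.erase x ∈ K := mem_of_face_subset hpm hH.1 (Finset.erase_subset x H)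
    obtain ⟨A, B, hab, hA, hB, hsA, hsB, _⟩ :=
      two_facets hpm hσK (erase_card_of_facet hpm hH hx)
    have key : ∀ C, IsFacet K C → H.erase x ⊆ C → x ∈ C → C = H :=
      fun C hC hsC hxC => hH.2 C hC.1 (sub_of_erase_sub hxC hsC)
    by_cases hxA : x ∈ A
    · have hxB : x ∉ B := fun hxB => hab ((key A hA hsA hxA).trans (key B hB hsB hxB).symm)
      exact ⟨B, hB, hxB, Or.inr ⟨hsB, fun h => hxB (h ▸ hx)⟩⟩
    · exact ⟨A, hA, hxA, Or.inr ⟨hsA, fun h => hxA (h ▸ hx)⟩⟩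
  · exact ⟨H, hH, hx, Or.inl rfl⟩

private lemma anchor_unique (hpm : Pseudomanifold K d) {H A A' : Finset V}
    (hH : IsFacet K H) (h1 : Anchor K x H A) (h2 : Anchor K x H A') : A = A' := by
  obtain ⟨hAf, hxA, hAo⟩ := h1
  obtain ⟨hA'f, hxA', hA'o⟩ := h2
  by_cases hx : x ∈ H
  · rcases hAo with rfl | ⟨hsA, hneA⟩
    · exact absurd hx hxA
    rcases hA'o with rfl | ⟨hsA', hneA'⟩
    · exact absurd hx hxA'
    have hσK : H.erase x ∈ K := mem_of_face_subset hpm hH.1 (Finset.erase_subset x H)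
    exact pigeon hpm hσK (erase_card_of_facet hpm hH hx) hAf hA'f hH hsA hsA'
      (Finset.erase_subset x H) hneA hneA'
  · rw [anchor_id hH hx ⟨hAf, hxA, hAo⟩, anchor_id hH hx ⟨hA'f, hxA', hA'o⟩]

private lemma edge_lift [Fintype V] (hpm : Pseudomanifold K d) {H H' A A' : Finset V}
    (hH : IsFacet K H) (hH' : IsFacet K H') (hne : H ≠ H') (hcard : (H ∩ H').card = d)
    (h1 : Anchor K x H A) (h2 : Anchor K x H' A') :
    Relation.ReflTransGen (AntiRel K d x) A A' := by
  obtain ⟨hAf, hxA, hAo⟩ := h1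
  obtain ⟨hA'f, hxA', hA'o⟩ := h2
  by_cases hxH : x ∈ H <;> by_cases hxH' : x ∈ H'
  · -- both contain x : the hard case
    rcases hAo with rfl | ⟨hsA, _⟩
    · exact absurd hxH hxA
    rcases hA'o with rfl | ⟨hsA', _⟩
    · exact absurd hxH' hxA'
    exact starStarLift hpm hH hH' hxH hxH' hne hcard hAf hA'f hxA hxA' hsA hsA'
  · -- x ∈ H, x ∉ H'
    have hA'H : A' = H' := anchor_id hH' hxH' ⟨hA'f, hxA', hA'o⟩
    rcases hAo with rfl | ⟨hsA, hneA⟩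
    · exact absurd hxH hxA
    have hkey : H ∩ H' = H.erase x :=
      unique_d_subset hxH Finset.inter_subset_left
        (fun h => hxH' (Finset.mem_of_mem_inter_right h)) hcard (facet_card hpm hH)
    have hsH' : H.erase x ⊆ H' := hkey ▸ Finset.inter_subset_right
    have hσK : H.erase x ∈ K := mem_of_face_subset hpm hH.1 (Finset.erase_subset x H)
    have hAH' : A = H' := pigeon hpm hσK (erase_card_of_facet hpm hH hxH) hAf hH' hH
      hsA hsH' (Finset.erase_subset x H) hneA (Ne.symm hne)
    rw [hAH', hA'H]
  · -- x ∉ H, x ∈ H'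
    have hAH : A = H := anchor_id hH hxH ⟨hAf, hxA, hAo⟩
    rcases hA'o with rfl | ⟨hsA', hneA'⟩
    · exact absurd hxH' hxA'
    have hkey : H ∩ H' = H'.erase x :=
      unique_d_subset hxH' Finset.inter_subset_right
        (fun h => hxH (Finset.mem_of_mem_inter_left h)) hcard (facet_card hpm hH')
    have hsH : H'.erase x ⊆ H := hkey ▸ Finset.inter_subset_left
    have hσK : H'.erase x ∈ K := mem_of_face_subset hpm hH'.1 (Finset.erase_subset x H')
    have hA'H : A' = H := pigeon hpm hσK (erase_card_of_facet hpm hH' hxH') hA'f hH hH'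
      hsA' hsH (Finset.erase_subset x H') hneA' hne
    rw [hAH, hA'H]
  · -- neither contains x : a single step
    rw [anchor_id hH hxH ⟨hAf, hxA, hAo⟩, anchor_id hH' hxH' ⟨hA'f, hxA', hA'o⟩]
    exact Relation.ReflTransGen.single ⟨hH, hH', hxH, hxH', hcard⟩

/-- Barnette's lemma: facets avoiding `x` are connected through ridges avoiding `x`. -/
private lemma barnette [Fintype V] (hpm : Pseudomanifold K d) {P Q : Finset V}
    (hP : IsFacet K P) (hQ : IsFacet K Q) (hxP : x ∉ P) (hxQ : x ∉ Q) :
    Relation.ReflTransGen (AntiRel K d x) P Q := by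
  obtain ⟨p⟩ := hpm.2.2.2.preconnected ⟨P, hP⟩ ⟨Q, hQ⟩
  have main : ∀ (a b : {F : Finset V // IsFacet K F}) (p : (facetGraph K d).Walk a b)
      (A B : Finset V), Anchor K x a.1 A → Anchor K x b.1 B →
      Relation.ReflTransGen (AntiRel K d x) A B := by
    intro a b p
    induction p with
    | nil =>
      intro A B h1 h2
      rename_i c
      rw [anchor_unique hpm c.2 h1 h2]
    | cons h q ih =>
      intro A B h1 h2
      rename_i c m b'
      obtain ⟨A₁, hA₁⟩ := anchor_exists hpm m.2
      have h' : c ≠ m ∧ ((c : Finset V) ∩ (m : Finset V)).card = d := h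
      have hcm : c.1 ≠ m.1 := fun hh => h'.1 (Subtype.ext hh)
      exact (edge_lift hpm c.2 m.2 hcm h'.2 h1 hA₁).trans (ih A₁ B hA₁ h2)
  exact main _ _ p P Q ⟨hP, hxP, Or.inl rfl⟩ ⟨hQ, hxQ, Or.inl rfl⟩

end MainProof
/-- In a banner pseudomanifold on vertex set `V`, the subgraph of the 1-skeleton induced
on the complement of the closed neighborhood `N(x)` is nonempty and connected. -/
theorem outside_nbhd_connected (K : Set (Finset V)) (d : ℕ) [Fintype V]
    (hpm : Pseudomanifold K d) (hb : Banner K d) (hvert : ∀ v : V, IsVertex K v) (x : V) :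
    ((closedNbhd K x)ᶜ : Set V).Nonempty ∧
      ((skeleton K).induce ((closedNbhd K x)ᶜ : Set V)).Connected := by
  classical
  obtain ⟨G₀, hG₀, hxG₀⟩ := exists_antistar_facet hpm (hvert x)
  obtain ⟨z₀, hz₀G, hz₀⟩ := facet_outside hpm hb hG₀ hxG₀
  have hz₀c : z₀ ∈ ((closedNbhd K x)ᶜ : Set V) := hz₀
  refine ⟨⟨z₀, hz₀c⟩, ?_⟩
  rw [SimpleGraph.connected_iff]
  refine ⟨?_, ⟨⟨z₀, hz₀c⟩⟩⟩
  rintro ⟨u, hu⟩ ⟨w, hw⟩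
  -- every outside vertex lies in a facet avoiding x
  have hfacet_of : ∀ v : V, v ∈ ((closedNbhd K x)ᶜ : Set V) →
      ∃ F, IsFacet K F ∧ v ∈ F ∧ x ∉ F := by
    intro v hv
    obtain ⟨F, hF, hsF⟩ := exists_facet_ext hpm (hvert v)
    have hvF : v ∈ F := hsF (Finset.mem_singleton_self v)
    refine ⟨F, hF, hvF, fun hxF => ?_⟩
    have hpair : ({x, v} : Finset V) ∈ K := by
      refine mem_of_face_subset hpm hF.1 (fun t ht => ?_)
      rcases Finset.mem_insert.mp ht with rfl | ht'
      · exact hxF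
      · rw [Finset.mem_singleton.mp ht']; exact hvF
    exact hv (mem_closedNbhd_iff.mpr (Or.inr hpair))
  obtain ⟨Fu, hFu, huFu, hxFu⟩ := hfacet_of u hu
  obtain ⟨Fw, hFw, hwFw, hxFw⟩ := hfacet_of w hw
  have hreach := barnette hpm hFu hFw hxFu hxFw
  -- connecting two outside vertices inside one face
  have hstep : ∀ (P : Finset V), P ∈ K →
      ∀ (z t : V) (hz : z ∈ ((closedNbhd K x)ᶜ : Set V))
        (ht : t ∈ ((closedNbhd K x)ᶜ : Set V)), z ∈ P → t ∈ P →
      ((skeleton K).induce ((closedNbhd K x)ᶜ : Set V)).Reachable ⟨z, hz⟩ ⟨t, ht⟩ := by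
    intro P hPK z t hz ht hzP htP
    by_cases hzt : z = t
    · subst hzt
      exact SimpleGraph.Reachable.refl _
    · apply SimpleGraph.Adj.reachable
      show z ≠ t ∧ ({z, t} : Finset V) ∈ K
      refine ⟨hzt, mem_of_face_subset hpm hPK (fun s hs => ?_)⟩
      rcases Finset.mem_insert.mp hs with rfl | hs'
      · exact hzP
      · rw [Finset.mem_singleton.mp hs']; exact htP
  -- induct along the antistar facet chain
  have main : ∀ P, Relation.ReflTransGen (AntiRel K d x) P Fw →
      ∀ (z : V) (hz : z ∈ ((closedNbhd K x)ᶜ : Set V)), z ∈ P →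
      ((skeleton K).induce ((closedNbhd K x)ᶜ : Set V)).Reachable ⟨z, hz⟩ ⟨w, hw⟩ := by
    intro P hchain
    induction hchain using Relation.ReflTransGen.head_induction_on with
    | refl =>
      intro z hz hzP
      exact hstep Fw hFw.1 z w hz hw hzP hwFw
    | @head P₁ C hrel hchain' ih =>
      intro z hz hzP
      obtain ⟨hP₁f, hCf, hxP₁, hxC, hcard⟩ := hrel
      obtain ⟨t, htm, htn⟩ := shared_outside hpm hb hP₁f hCf hxP₁ hxC hcard
      have ht : t ∈ ((closedNbhd K x)ᶜ : Set V) := htn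
      exact (hstep P₁ hP₁f.1 z t hz ht hzP (Finset.mem_of_mem_inter_left htm)).trans
        (ih t ht (Finset.mem_of_mem_inter_right htm))
  exact main Fu hreach u hu huFu
end

section
/- Let Δ be a d-dimensional normal simplicial pseudomanifold that is banner. Then the 1-skeleton graph of Δ is 2d-connected. -/
open Finset

variable {V : Type*} [DecidableEq V]

namespace BannerAux

open Finset

variable {V : Type*} [DecidableEq V]

/-! ### Basic complex lemmas -/

theorem down {K : Set (Finset V)} (hK : IsComplex K) {σ τ : Finset V} (hσ : σ ∈ K)
    (h : τ ⊆ σ) : τ ∈ K :=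
  hK.2 σ hσ τ h

theorem empty_mem {K : Set (Finset V)} (hK : IsComplex K) : (∅ : Finset V) ∈ K := by
  obtain ⟨σ, hσ⟩ := hK.1
  exact down hK hσ (Finset.empty_subset σ)

theorem vertex_of_mem {K : Set (Finset V)} (hK : IsComplex K) {σ : Finset V} (hσ : σ ∈ K)
    {x : V} (hx : x ∈ σ) : IsVertex K x :=
  down hK hσ (Finset.singleton_subset_iff.mpr hx)

theorem pair_mem {K : Set (Finset V)} (hK : IsComplex K) {σ : Finset V} (hσ : σ ∈ K) {x y : V}
    (hx : x ∈ σ) (hy : y ∈ σ) : ({x, y} : Finset V) ∈ K :=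
  down hK hσ (Finset.insert_subset hx (Finset.singleton_subset_iff.mpr hy))

theorem facet_of_card {K : Set (Finset V)} {d : ℕ} (hp : PureCplx K d) {σ : Finset V}
    (hσ : σ ∈ K) (hc : σ.card = d + 1) : IsFacet K σ := by
  obtain ⟨F, hF, hsub⟩ := hp.1 σ hσ
  have he : σ = F := Finset.eq_of_subset_of_card_le hsub (by rw [hp.2 F hF, hc])
  constructor
  · exact hσ
  · intro G hG hsubG
    obtain ⟨F', hF', hsub'⟩ := hp.1 G hG
    have : σ = F' := Finset.eq_of_subset_of_card_le (hsubG.trans hsub')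
      (by rw [hp.2 F' hF', hc])
    have hGσ : G ⊆ σ := this ▸ hsub'
    exact Finset.Subset.antisymm hGσ hsubG

/-! ### Reachability within a vertex set -/

def Rel (G : SimpleGraph V) (U : Set V) (a b : V) : Prop := G.Adj a b ∧ a ∈ U ∧ b ∈ U

def ReachOn (G : SimpleGraph V) (U : Set V) (u v : V) : Prop :=
  Relation.ReflTransGen (Rel G U) u v

theorem ReachOn.rfl {G : SimpleGraph V} {U : Set V} {u : V} : ReachOn G U u u :=
  Relation.ReflTransGen.refl

theorem ReachOn.single {G : SimpleGraph V} {U : Set V} {u v : V} (h : Rel G U u v) :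
    ReachOn G U u v :=
  Relation.ReflTransGen.single h

theorem ReachOn.trans {G : SimpleGraph V} {U : Set V} {u v w : V} (h : ReachOn G U u v)
    (h' : ReachOn G U v w) : ReachOn G U u w :=
  Relation.ReflTransGen.trans h h'

theorem ReachOn.symm {G : SimpleGraph V} {U : Set V} {u v : V} (h : ReachOn G U u v) :
    ReachOn G U v u := by
  have hsym : Symmetric (Rel G U) := fun a b hr => ⟨hr.1.symm, hr.2.2, hr.2.1⟩
  haveI : Std.Symm (Rel G U) := ⟨fun a b hr => hsym hr⟩
  exact (Relation.ReflTransGen.stdSymm (r := Rel G U)).symm _ _ h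

theorem ReachOn.mono₂ {G G' : SimpleGraph V} {U U' : Set V}
    (hadj : ∀ a b, G.Adj a b → G'.Adj a b) (hU : U ⊆ U') {u v : V} (h : ReachOn G U u v) :
    ReachOn G' U' u v :=
  Relation.ReflTransGen.mono (fun a b hr => ⟨hadj a b hr.1, hU hr.2.1, hU hr.2.2⟩) _ _ h

theorem ReachOn.mem_right {G : SimpleGraph V} {U : Set V} {u v : V} (hu : u ∈ U)
    (h : ReachOn G U u v) : v ∈ U := by
  induction h with
  | refl => exact hu
  | tail _ h2 _ => exact h2.2.2

theorem induce_connected_iff (G : SimpleGraph V) (U : Set V) :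
    (G.induce U).Connected ↔ U.Nonempty ∧ ∀ u ∈ U, ∀ v ∈ U, ReachOn G U u v := by
  constructor
  · intro h
    obtain ⟨⟨u₀, hu₀⟩⟩ := h.nonempty
    refine ⟨⟨u₀, hu₀⟩, ?_⟩
    intro u hu v hv
    have hr := h.preconnected ⟨u, hu⟩ ⟨v, hv⟩
    rw [SimpleGraph.reachable_iff_reflTransGen] at hr
    have key : ∀ (a b : U), Relation.ReflTransGen (G.induce U).Adj a b → ReachOn G U a.1 b.1 := by
      intro a b hab
      induction hab with
      | refl => exact ReachOn.rfl
      | tail _ h2 ih =>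
          exact ih.trans (ReachOn.single ⟨h2, by exact (Subtype.mem _), by exact (Subtype.mem _)⟩)
    exact key _ _ hr
  · rintro ⟨⟨u₀, hu₀⟩, hconn⟩
    rw [SimpleGraph.connected_iff]
    refine ⟨?_, ⟨⟨u₀, hu₀⟩⟩⟩
    rintro ⟨u, hu⟩ ⟨v, hv⟩
    have h := hconn u hu v hv
    have key : ∀ (b : V), ReachOn G U u b → ∀ (hb : b ∈ U),
        (G.induce U).Reachable ⟨u, hu⟩ ⟨b, hb⟩ := by
      intro b hb
      induction hb with
      | refl => intro _; exact SimpleGraph.Reachable.refl _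
      | tail _ h2 ih =>
          intro hc
          refine (ih h2.2.1).trans ?_
          exact SimpleGraph.Adj.reachable (by exact h2.1)
    exact key v h hv

theorem conn_congr {G : SimpleGraph V} {U U' : Set V} (h : U = U')
    (hc : (G.induce U).Connected) : (G.induce U').Connected := h ▸ hc

end BannerAux
namespace BannerAux

open Finset

variable {V : Type*} [DecidableEq V]

/-! ### Link lemmas -/

theorem mem_link {K : Set (Finset V)} {σ τ : Finset V} :
    τ ∈ link K σ ↔ Disjoint τ σ ∧ τ ∪ σ ∈ K := Iff.rfl

theorem link_isComplex {K : Set (Finset V)} (hK : IsComplex K) {σ : Finset V} (hσ : σ ∈ K) :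
    IsComplex (link K σ) := by
  constructor
  · exact ⟨∅, by simp [mem_link, hσ]⟩
  · rintro τ ⟨hd, hu⟩ ρ hρ
    exact ⟨Finset.disjoint_of_subset_left hρ hd,
      down hK hu (Finset.union_subset_union_left hρ)⟩

theorem skeleton_link_le {K : Set (Finset V)} (hK : IsComplex K) {σ : Finset V} {a b : V}
    (h : (skeleton (link K σ)).Adj a b) : (skeleton K).Adj a b := by
  obtain ⟨hne, hm⟩ := h
  exact ⟨hne, down hK hm.2 Finset.subset_union_left⟩

def verts (K : Set (Finset V)) : Set V := {x | IsVertex K x}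

theorem verts_link_singleton {K : Set (Finset V)} {x : V} :
    verts (link K {x}) = {z | z ≠ x ∧ ({x, z} : Finset V) ∈ K} := by
  ext z
  simp only [verts, Set.mem_setOf_eq, IsVertex, mem_link, Finset.disjoint_singleton]
  have hzx : ({z} ∪ {x} : Finset V) = {x, z} := by ext a; simp [or_comm]
  rw [hzx]

theorem facet_link_of_facet {K : Set (Finset V)} (hK : IsComplex K) {σ F : Finset V}
    (hσ : σ ⊆ F) (hF : IsFacet K F) : IsFacet (link K σ) (F \ σ) := by
  constructor
  · exact ⟨Finset.sdiff_disjoint, by rw [Finset.sdiff_union_of_subset hσ]; exact hF.1⟩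
  · rintro G ⟨hGd, hGu⟩ hsub
    have hFsub : F ⊆ G ∪ σ := by
      intro a ha
      by_cases haσ : a ∈ σ
      · exact Finset.mem_union_right _ haσ
      · exact Finset.mem_union_left _ (hsub (Finset.mem_sdiff.mpr ⟨ha, haσ⟩))
    have h1 : G ∪ σ = F := hF.2 _ hGu hFsub
    have h2 : (G ∪ σ) \ σ = G := Finset.union_sdiff_cancel_right hGd
    rw [← h2, h1]

theorem isFacet_link_iff {K : Set (Finset V)} {d : ℕ} (hK : IsComplex K) (hp : PureCplx K d)
    {σ : Finset V} (hσ : σ ∈ K) {G : Finset V} :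
    IsFacet (link K σ) G ↔ Disjoint G σ ∧ IsFacet K (G ∪ σ) := by
  constructor
  · intro hG
    have hGd := hG.1.1
    have hGu := hG.1.2
    obtain ⟨F, hF, hsub⟩ := hp.1 _ hGu
    have hσF : σ ⊆ F := Finset.subset_union_right.trans hsub
    have hfl := facet_link_of_facet hK hσF hF
    have hGF : G ⊆ F \ σ :=
      Finset.subset_sdiff.mpr ⟨Finset.subset_union_left.trans hsub, hGd⟩
    have hEq : F \ σ = G := hG.2 _ hfl.1 hGF
    refine ⟨hGd, ?_⟩
    have hGσF : G ∪ σ = F := by rw [← hEq, Finset.sdiff_union_of_subset hσF]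
    rwa [hGσF]
  · rintro ⟨hGd, hF⟩
    have h := facet_link_of_facet hK Finset.subset_union_right hF
    rwa [Finset.union_sdiff_cancel_right hGd] at h

theorem pure_link {K : Set (Finset V)} {d : ℕ} (hK : IsComplex K) (hp : PureCplx K d)
    {σ : Finset V} (hσ : σ ∈ K) {k : ℕ} (hk : σ.card + k = d) : PureCplx (link K σ) k := by
  constructor
  · intro τ hτ
    obtain ⟨F, hF, hsub⟩ := hp.1 _ hτ.2
    have hσF : σ ⊆ F := Finset.subset_union_right.trans hsub
    exact ⟨F \ σ, facet_link_of_facet hK hσF hF,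
      Finset.subset_sdiff.mpr ⟨Finset.subset_union_left.trans hsub, hτ.1⟩⟩
  · intro G hG
    rw [isFacet_link_iff hK hp hσ] at hG
    have h1 : (G ∪ σ).card = d + 1 := hp.2 _ hG.2
    have h2 : (G ∪ σ).card = G.card + σ.card := Finset.card_union_of_disjoint hG.1
    omega

theorem ridge_link {K : Set (Finset V)} {d : ℕ} (hK : IsComplex K) (hp : PureCplx K d)
    (hridge : ∀ σ ∈ K, σ.card = d → {F : Finset V | IsFacet K F ∧ σ ⊆ F}.ncard = 2)
    {σ ρ : Finset V} (hσ : σ ∈ K) (hρ : ρ ∈ link K σ) (hc : ρ.card + σ.card = d) :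
    {G : Finset V | IsFacet (link K σ) G ∧ ρ ⊆ G}.ncard = 2 := by
  have hρσ : ρ ∪ σ ∈ K := hρ.2
  have hcard : (ρ ∪ σ).card = d := by
    rw [Finset.card_union_of_disjoint hρ.1]; exact hc
  have h2 := hridge _ hρσ hcard
  have himg : {G : Finset V | IsFacet (link K σ) G ∧ ρ ⊆ G} =
      (fun F => F \ σ) '' {F : Finset V | IsFacet K F ∧ ρ ∪ σ ⊆ F} := by
    ext G
    simp only [Set.mem_image, Set.mem_setOf_eq]
    constructor
    · rintro ⟨hG, hρG⟩
      have hG' := (isFacet_link_iff hK hp hσ).mp hG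
      exact ⟨G ∪ σ, ⟨hG'.2, Finset.union_subset_union_left hρG⟩,
        Finset.union_sdiff_cancel_right hG'.1⟩
    · rintro ⟨F, ⟨hF, hsub⟩, rfl⟩
      have hσF : σ ⊆ F := Finset.subset_union_right.trans hsub
      refine ⟨facet_link_of_facet hK hσF hF, ?_⟩
      exact Finset.subset_sdiff.mpr ⟨Finset.subset_union_left.trans hsub, hρ.1⟩
  rw [himg, Set.ncard_image_of_injOn, h2]
  intro F₁ h₁ F₂ h₂ he
  dsimp only at he
  have hσ₁ : σ ⊆ F₁ := Finset.subset_union_right.trans h₁.2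
  have hσ₂ : σ ⊆ F₂ := Finset.subset_union_right.trans h₂.2
  calc F₁ = F₁ \ σ ∪ σ := (Finset.sdiff_union_of_subset hσ₁).symm
    _ = F₂ \ σ ∪ σ := by rw [he]
    _ = F₂ := Finset.sdiff_union_of_subset hσ₂

theorem link_link {K : Set (Finset V)} {x : V} {τ : Finset V} (hτ : τ ∈ link K {x}) :
    link (link K {x}) τ = link K (τ ∪ {x}) := by
  have hdx : Disjoint τ ({x} : Finset V) := hτ.1
  ext ρ
  simp only [mem_link, Finset.disjoint_union_right]
  constructor
  · rintro ⟨h1, h2, h3⟩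
    have hx : Disjoint ρ ({x} : Finset V) :=
      Finset.disjoint_of_subset_left Finset.subset_union_left h2
    exact ⟨⟨h1, hx⟩, by rwa [← Finset.union_assoc]⟩
  · rintro ⟨⟨h1, h2⟩, h3⟩
    refine ⟨h1, ?_, by rwa [Finset.union_assoc]⟩
    exact Finset.disjoint_union_left.mpr ⟨h2, hdx⟩

end BannerAux
namespace BannerAux

open Finset

variable {V : Type*} [DecidableEq V]

/-! ### Strong connectivity of links -/

theorem strongConn_link {K : Set (Finset V)} {d : ℕ} (hn : NormalPM K d) :
    ∀ (k : ℕ) (σ : Finset V), σ ∈ K → σ.Nonempty → σ.card + k = d →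
    (facetGraph (link K σ) k).Connected := by
  obtain ⟨⟨hK, hp, hridge, hsc⟩, hnorm⟩ := hn
  intro k
  induction k with
  | zero =>
    intro σ hσ hne hcard
    have hLc := link_isComplex hK hσ
    have hLp := pure_link hK hp hσ (k := 0) hcard
    have hempty : (∅ : Finset V) ∈ link K σ := empty_mem hLc
    obtain ⟨F₀, hF₀, _⟩ := hLp.1 ∅ hempty
    rw [SimpleGraph.connected_iff]
    refine ⟨?_, ⟨⟨F₀, hF₀⟩⟩⟩
    rintro ⟨A, hA⟩ ⟨B, hB⟩
    by_cases hAB : A = B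
    · subst hAB; rfl
    · refine SimpleGraph.Adj.reachable ?_
      obtain ⟨a, ha⟩ := Finset.card_eq_one.mp (hLp.2 A hA)
      obtain ⟨b, hbb⟩ := Finset.card_eq_one.mp (hLp.2 B hB)
      subst ha hbb
      refine ⟨by simpa [Subtype.ext_iff] using hAB, ?_⟩
      have hab : a ≠ b := by
        intro h; exact hAB (by rw [h])
      simp [Finset.singleton_inter_of_notMem, hab]
  | succ k ih =>
    intro σ hσ hne hcard
    have hLc := link_isComplex hK hσ
    have hLp := pure_link hK hp hσ (k := k + 1) hcard
    have hcc : ComplexConnected (link K σ) := hnorm σ hσ (by omega)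
    have hreach := ((induce_connected_iff (skeleton (link K σ))
      {x | IsVertex (link K σ) x}).mp hcc).2
    -- the star of a vertex is facet-connected
    have star : ∀ z : V, IsVertex (link K σ) z →
        ∀ (A B : {F : Finset V // IsFacet (link K σ) F}), z ∈ A.1 → z ∈ B.1 →
        (facetGraph (link K σ) (k + 1)).Reachable A B := by
      intro z hz A B hzA hzB
      have hzσ : z ∉ σ := by
        have := (hz : ({z} : Finset V) ∈ link K σ).1
        simpa [Finset.disjoint_singleton_left] using this
      have hins : insert z σ ∈ K := by
        have h := (hz : ({z} : Finset V) ∈ link K σ).2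
        rwa [show ({z} : Finset V) ∪ σ = insert z σ from rfl] at h
      have hconn' := ih (insert z σ) hins (Finset.insert_nonempty _ _)
        (by rw [Finset.card_insert_of_notMem hzσ]; omega)
      -- facets of `link K σ` containing z correspond to facets of `link K (insert z σ)`
      have toSmall : ∀ (C : Finset V), IsFacet (link K σ) C → z ∈ C →
          IsFacet (link K (insert z σ)) (C.erase z) := by
        intro C hC hzC
        obtain ⟨hCd, hCf⟩ := (isFacet_link_iff hK hp hσ).mp hC
        refine (isFacet_link_iff hK hp hins).mpr ⟨?_, ?_⟩
        · rw [Finset.disjoint_insert_right]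
          exact ⟨Finset.notMem_erase _ _, Finset.disjoint_of_subset_left (Finset.erase_subset _ _) hCd⟩
        · have : C.erase z ∪ insert z σ = C ∪ σ := by
            ext a
            simp only [Finset.mem_union, Finset.mem_erase, Finset.mem_insert]
            constructor
            · rintro (⟨_, h⟩ | (rfl | h))
              · exact Or.inl h
              · exact Or.inl hzC
              · exact Or.inr h
            · rintro (h | h)
              · by_cases haz : a = z
                · exact Or.inr (Or.inl haz)
                · exact Or.inl ⟨haz, h⟩
              · exact Or.inr (Or.inr h)
          rwa [this]
      have toBig : ∀ (H : Finset V), IsFacet (link K (insert z σ)) H →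
          IsFacet (link K σ) (insert z H) ∧ z ∉ H := by
        intro H hH
        obtain ⟨hHd, hHf⟩ := (isFacet_link_iff hK hp hins).mp hH
        have hzH : z ∉ H := by
          have := Finset.disjoint_insert_right.mp hHd
          exact fun h => absurd (Finset.mem_insert_self z σ) (Finset.disjoint_left.mp hHd h)
        constructor
        · refine (isFacet_link_iff hK hp hσ).mpr ⟨?_, ?_⟩
          · rw [Finset.disjoint_insert_left]
            exact ⟨hzσ, Finset.disjoint_of_subset_right (Finset.subset_insert _ _) hHd⟩
          · have : insert z H ∪ σ = H ∪ insert z σ := by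
              ext a
              simp only [Finset.mem_union, Finset.mem_insert]
              tauto
            rwa [this]
        · exact hzH
      -- transfer reachability through `insert z`
      have key : ∀ (H₁ H₂ : {F : Finset V // IsFacet (link K (insert z σ)) F}),
          (facetGraph (link K (insert z σ)) k).Reachable H₁ H₂ →
          (facetGraph (link K σ) (k+1)).Reachable
            ⟨insert z H₁.1, (toBig _ H₁.2).1⟩ ⟨insert z H₂.1, (toBig _ H₂.2).1⟩ := by
        intro H₁ H₂ h
        let f : {F : Finset V // IsFacet (link K (insert z σ)) F} →
            {F : Finset V // IsFacet (link K σ) F} :=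
          fun H => ⟨insert z H.1, (toBig _ H.2).1⟩
        have hf : ∀ a b, (facetGraph (link K (insert z σ)) k).Adj a b →
            (facetGraph (link K σ) (k+1)).Adj (f a) (f b) := by
          rintro ⟨Ha, hHa⟩ ⟨Hb, hHb⟩ ⟨hne', hcard'⟩
          have hza := (toBig _ hHa).2
          have hzb := (toBig _ hHb).2
          constructor
          · intro h'
            apply hne'
            have : insert z Ha = insert z Hb := congrArg Subtype.val h'
            have h2 : Ha = Hb := by
              have := congrArg (fun s => Finset.erase s z) this
              simpa [Finset.erase_insert hza, Finset.erase_insert hzb] using this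
            exact Subtype.ext h2
          · have hint : insert z Ha ∩ insert z Hb = insert z (Ha ∩ Hb) := by
              ext a
              simp only [Finset.mem_inter, Finset.mem_insert]
              tauto
            have hzint : z ∉ Ha ∩ Hb := fun h => hza (Finset.mem_inter.mp h).1
            show (insert z Ha ∩ insert z Hb).card = k + 1
            rw [hint, Finset.card_insert_of_notMem hzint, hcard']
        exact SimpleGraph.Reachable.map (⟨f, fun h => hf _ _ h⟩ :
          facetGraph (link K (insert z σ)) k →g facetGraph (link K σ) (k+1)) h
      have hA' := toSmall A.1 A.2 hzA
      have hB' := toSmall B.1 B.2 hzB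
      have hr := hconn'.preconnected ⟨A.1.erase z, hA'⟩ ⟨B.1.erase z, hB'⟩
      have := key _ _ hr
      have eA : (⟨insert z (A.1.erase z), (toBig _ hA').1⟩ :
          {F : Finset V // IsFacet (link K σ) F}) = A :=
        Subtype.ext (Finset.insert_erase hzA)
      have eB : (⟨insert z (B.1.erase z), (toBig _ hB').1⟩ :
          {F : Finset V // IsFacet (link K σ) F}) = B :=
        Subtype.ext (Finset.insert_erase hzB)
      rwa [eA, eB] at this
    -- main argument
    have hvert_of_mem : ∀ (C : {F : Finset V // IsFacet (link K σ) F}) {z : V}, z ∈ C.1 →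
        IsVertex (link K σ) z := fun C {z} hz => vertex_of_mem hLc C.2.1 hz
    have main : ∀ (A : {F : Finset V // IsFacet (link K σ) F}) (a : V), a ∈ A.1 →
        ∀ z : V, ReachOn (skeleton (link K σ)) {x | IsVertex (link K σ) x} a z →
        ∀ (C : {F : Finset V // IsFacet (link K σ) F}), z ∈ C.1 →
        (facetGraph (link K σ) (k+1)).Reachable A C := by
      intro A a ha z hz
      induction hz with
      | refl => intro C haC; exact star a (hvert_of_mem A ha) A C ha haC
      | @tail y z h1 h2 ih2 =>
        intro C hzC
        have hyz : ({y, z} : Finset V) ∈ link K σ := h2.1.2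
        obtain ⟨D, hD, hsubD⟩ := hLp.1 _ hyz
        have hyD : y ∈ D := hsubD (Finset.mem_insert_self _ _)
        have hzD : z ∈ D := hsubD (by simp)
        exact (ih2 ⟨D, hD⟩ hyD).trans (star z (hvert_of_mem C hzC) ⟨D, hD⟩ C hzD hzC)
    have hempty : (∅ : Finset V) ∈ link K σ := empty_mem hLc
    obtain ⟨F₀, hF₀, _⟩ := hLp.1 ∅ hempty
    rw [SimpleGraph.connected_iff]
    refine ⟨?_, ⟨⟨F₀, hF₀⟩⟩⟩
    rintro A B
    have hAcard : A.1.card = k + 2 := hLp.2 _ A.2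
    have hBcard : B.1.card = k + 2 := hLp.2 _ B.2
    obtain ⟨a, ha⟩ := Finset.card_pos.mp (by omega : 0 < A.1.card)
    obtain ⟨b, hbb⟩ := Finset.card_pos.mp (by omega : 0 < B.1.card)
    have hva : IsVertex (link K σ) a := hvert_of_mem A ha
    have hvb : IsVertex (link K σ) b := hvert_of_mem B hbb
    exact main A a ha b (hreach a hva b hvb) B hbb

end BannerAux
namespace BannerAux

open Finset

variable {V : Type*} [DecidableEq V]

theorem union_singleton_eq_insert (x : V) (s : Finset V) : s ∪ {x} = insert x s := by
  ext a; simp [or_comm]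

/-! ### Links of normal pseudomanifolds are normal pseudomanifolds -/

theorem normalPM_link {K : Set (Finset V)} {m : ℕ} (hn : NormalPM K (m + 1)) {x : V}
    (hx : IsVertex K x) : NormalPM (link K {x}) m := by
  obtain ⟨⟨hK, hp, hridge, hsc⟩, hnorm⟩ := hn
  have hxK : ({x} : Finset V) ∈ K := hx
  have hLc := link_isComplex hK hxK
  have hLp := pure_link hK hp hxK (k := m) (by simp; omega)
  refine ⟨⟨hLc, hLp, ?_, ?_⟩, ?_⟩
  · intro ρ hρ hcard
    exact ridge_link hK hp hridge hxK hρ (by simp [hcard])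
  · exact strongConn_link ⟨⟨hK, hp, hridge, hsc⟩, hnorm⟩ m {x} hxK
      (Finset.singleton_nonempty x) (by simp; omega)
  · intro τ hτ hcard
    rw [link_link hτ]
    refine hnorm _ hτ.2 ?_
    rw [Finset.card_union_of_disjoint hτ.1, Finset.card_singleton]
    omega

/-! ### Links of banner complexes are banner -/

theorem banner_link {K : Set (Finset V)} {m : ℕ} (hK : IsComplex K) (hb : Banner K (m + 1))
    {x : V} (hm : 1 ≤ m) : Banner (link K {x}) m := by
  constructor
  · intro T hclique hcard hcrit
    have hvertT : ∀ u ∈ T, u ≠ x ∧ ({x, u} : Finset V) ∈ K := by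
      intro u hu
      obtain ⟨v, hv, hvu⟩ := Finset.exists_mem_ne (by omega : 1 < T.card) u
      have hpair := hclique u hu v hv hvu.symm
      obtain ⟨hdis, hmem⟩ := hpair
      have hux : u ≠ x := by
        intro h
        have h1 : u ∈ ({u, v} : Finset V) := Finset.mem_insert_self _ _
        have h2 : u ∈ ({x} : Finset V) := by simp [h]
        exact Finset.disjoint_left.mp hdis h1 h2
      refine ⟨hux, down hK hmem ?_⟩
      intro a haa
      rcases Finset.mem_insert.mp haa with rfl | haa
      · exact Finset.mem_union_right _ (by simp)
      · have : a = u := by simpa using haa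
        subst this
        exact Finset.mem_union_left _ (by simp)
    have hxT : x ∉ T := fun h => (hvertT x h).1 rfl
    have hcliqueK : IsCliqueIn K (insert x T) := by
      intro u hu v hv huv
      rcases Finset.mem_insert.mp hu with rfl | huT
      · rcases Finset.mem_insert.mp hv with rfl | hvT
        · exact absurd rfl huv
        · exact (hvertT v hvT).2
      · rcases Finset.mem_insert.mp hv with rfl | hvT
        · rw [Finset.pair_comm]; exact (hvertT u huT).2
        · have hpair := hclique u huT v hvT huv
          exact down hK hpair.2 Finset.subset_union_left
    have hcritK : IsCritical K (insert x T) := by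
      obtain ⟨v, hvT, hvK⟩ := hcrit
      refine ⟨v, Finset.mem_insert_of_mem hvT, ?_⟩
      have hvx : x ≠ v := fun h => hxT (h ▸ hvT)
      rw [Finset.erase_insert_of_ne hvx]
      have h2 := hvK.2
      rwa [union_singleton_eq_insert] at h2
    have hTK : insert x T ∈ K :=
      hb.1 _ hcliqueK (by rw [Finset.card_insert_of_notMem hxT, hcard]) hcritK
    refine ⟨Finset.disjoint_singleton_right.mpr hxT, ?_⟩
    rwa [union_singleton_eq_insert]
  · rintro ⟨S', hcard, hsub⟩
    have hvS : ∀ u ∈ S', u ≠ x ∧ ({x, u} : Finset V) ∈ K := by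
      intro u hu
      have h1 : ({u} : Finset V) ⊆ S' := Finset.singleton_subset_iff.mpr hu
      have h2 : ({u} : Finset V) ≠ S' := by
        intro h
        have hcc := congrArg Finset.card h
        rw [Finset.card_singleton, hcard] at hcc
        omega
      have h3 := hsub _ h1 h2
      have hux : u ≠ x := by
        have hd := h3.1
        rw [Finset.disjoint_singleton] at hd
        exact hd
      refine ⟨hux, ?_⟩
      have h4 := h3.2
      rw [union_singleton_eq_insert] at h4
      refine down hK h4 ?_
      intro a ha
      rcases Finset.mem_insert.mp ha with rfl | ha
      · simp
      · simp only [Finset.mem_singleton] at ha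
        simp [ha]
    have hxS : x ∉ S' := fun h => (hvS x h).1 rfl
    apply hb.2
    refine ⟨insert x S', by rw [Finset.card_insert_of_notMem hxS, hcard], ?_⟩
    intro τ hτ hne
    by_cases hxτ : x ∈ τ
    · have h1 : τ.erase x ⊆ S' := by
        intro a ha
        obtain ⟨hax, haτ⟩ := Finset.mem_erase.mp ha
        rcases Finset.mem_insert.mp (hτ haτ) with rfl | h
        · exact absurd rfl hax
        · exact h
      have h2 : τ.erase x ≠ S' := by
        intro h
        apply hne
        rw [← Finset.insert_erase hxτ, h]
      have h3 := hsub _ h1 h2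
      have h4 := h3.2
      rw [union_singleton_eq_insert, Finset.insert_erase hxτ] at h4
      exact h4
    · have h1 : τ ⊆ S' := by
        intro a ha
        rcases Finset.mem_insert.mp (hτ ha) with rfl | h
        · exact absurd ha hxτ
        · exact h
      by_cases h2 : τ = S'
      · subst h2
        have hcliqueS : IsCliqueIn K τ := by
          intro u hu v hv huv
          have hps : ({u, v} : Finset V) ⊆ τ :=
            Finset.insert_subset hu (Finset.singleton_subset_iff.mpr hv)
          have hpne : ({u, v} : Finset V) ≠ τ := by
            intro h
            have hcc := congrArg Finset.card h
            rw [Finset.card_insert_of_notMem (by simp [huv]), Finset.card_singleton, hcard] at hcc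
            omega
          have h3 := hsub _ hps hpne
          exact down hK h3.2 Finset.subset_union_left
        have hcritS : IsCritical K τ := by
          obtain ⟨v₀, hv₀⟩ := Finset.card_pos.mp (by omega : 0 < τ.card)
          refine ⟨v₀, hv₀, ?_⟩
          have h1' : τ.erase v₀ ⊆ τ := Finset.erase_subset _ _
          have h2' : τ.erase v₀ ≠ τ := by
            intro h
            have := congrArg Finset.card h
            rw [Finset.card_erase_of_mem hv₀] at this
            omega
          have h3 := hsub _ h1' h2'
          exact down hK h3.2 Finset.subset_union_left
        exact hb.1 τ hcliqueS (by omega) hcritS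
      · exact down hK (hsub τ h1 h2).2 Finset.subset_union_left

/-! ### The opposite-vertex lemma -/

theorem ncard_two_members {A : Set (Finset V)} (h : A.ncard = 2) {F₁ F₂ : Finset V}
    (h₁ : F₁ ∈ A) (h₂ : F₂ ∈ A) (hne : F₁ ≠ F₂) : ∀ G ∈ A, G = F₁ ∨ G = F₂ := by
  obtain ⟨p, q, hpq, rfl⟩ := Set.ncard_eq_two.mp h
  intro G hG
  simp only [Set.mem_insert_iff, Set.mem_singleton_iff] at h₁ h₂ hG
  rcases h₁ with rfl | rfl <;> rcases h₂ with rfl | rfl <;> rcases hG with rfl | rfl <;> tauto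

theorem opp_not_adj {K : Set (Finset V)} {d : ℕ} (hK : IsComplex K)
    (hb : Banner K d) {σ : Finset V} (hσK : σ ∈ K) (hσc : σ.card = d) {a b : V}
    (ha : insert a σ ∈ K) (hbf : insert b σ ∈ K)
    (haσ : a ∉ σ) (hbσ : b ∉ σ) (hab : a ≠ b) : ({a, b} : Finset V) ∉ K := by
  intro habK
  apply hb.2
  have hbins : b ∉ insert a σ := by simp [hbσ, Ne.symm hab]
  have hains : a ∉ insert b σ := by simp [haσ, hab]
  refine ⟨insert a (insert b σ), ?_, ?_⟩
  · rw [Finset.card_insert_of_notMem hains, Finset.card_insert_of_notMem hbσ, hσc]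
  · intro τ hτ hne
    by_cases haτ : a ∈ τ
    · by_cases hbτ : b ∈ τ
      · obtain ⟨s, hs, hsτ⟩ : ∃ s ∈ σ, s ∉ τ := by
          by_contra hcon
          push_neg at hcon
          apply hne
          refine Finset.Subset.antisymm hτ ?_
          intro z hz
          rcases Finset.mem_insert.mp hz with rfl | hz
          · exact haτ
          rcases Finset.mem_insert.mp hz with rfl | hz
          · exact hbτ
          · exact hcon z hz
        set T' := insert a (insert b (σ.erase s)) with hT'
        have hbσ' : b ∉ σ.erase s := fun h => hbσ (Finset.mem_of_mem_erase h)
        have haσ' : a ∉ insert b (σ.erase s) := by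
          simp only [Finset.mem_insert]
          push_neg
          exact ⟨hab, fun h => haσ (Finset.mem_of_mem_erase h)⟩
        have hTclique : IsCliqueIn K T' := by
          intro u hu v hv huv
          have memcase : ∀ w ∈ T', w = a ∨ w = b ∨ w ∈ σ := by
            intro w hw
            rcases Finset.mem_insert.mp hw with rfl | hw
            · exact Or.inl rfl
            rcases Finset.mem_insert.mp hw with rfl | hw
            · exact Or.inr (Or.inl rfl)
            · exact Or.inr (Or.inr (Finset.mem_of_mem_erase hw))
          have hpair : ∀ u' v', u' = a ∨ u' = b ∨ u' ∈ σ → v' = a ∨ v' = b ∨ v' ∈ σ →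
              u' ≠ v' → ({u', v'} : Finset V) ∈ K := by
            intro u' v' hu' hv' huv'
            rcases hu' with rfl | rfl | hu' <;> rcases hv' with rfl | rfl | hv'
            · exact absurd rfl huv'
            · exact habK
            · exact pair_mem hK ha (Finset.mem_insert_self _ _) (Finset.mem_insert_of_mem hv')
            · rw [Finset.pair_comm]; exact habK
            · exact absurd rfl huv'
            · exact pair_mem hK hbf (Finset.mem_insert_self _ _) (Finset.mem_insert_of_mem hv')
            · rw [Finset.pair_comm]
              exact pair_mem hK ha (Finset.mem_insert_self _ _) (Finset.mem_insert_of_mem hu')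
            · rw [Finset.pair_comm]
              exact pair_mem hK hbf (Finset.mem_insert_self _ _) (Finset.mem_insert_of_mem hu')
            · exact pair_mem hK hσK hu' hv'
          exact hpair u v (memcase u hu) (memcase v hv) huv
        have hTcard : T'.card = d + 1 := by
          rw [hT', Finset.card_insert_of_notMem haσ', Finset.card_insert_of_notMem hbσ',
            Finset.card_erase_of_mem hs, hσc]
          have : 1 ≤ d := by rw [← hσc]; exact Finset.card_pos.mpr ⟨s, hs⟩
          omega
        have hTcrit : IsCritical K T' := by
          refine ⟨a, Finset.mem_insert_self _ _, ?_⟩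
          rw [hT', Finset.erase_insert haσ']
          refine down hK hbf ?_
          intro z hz
          rcases Finset.mem_insert.mp hz with rfl | hz
          · exact Finset.mem_insert_self _ _
          · exact Finset.mem_insert_of_mem (Finset.mem_of_mem_erase hz)
        have hT := hb.1 T' hTclique hTcard hTcrit
        refine down hK hT ?_
        intro z hz
        have hz' := hτ hz
        have hzs : z ≠ s := fun h => hsτ (h ▸ hz)
        rcases Finset.mem_insert.mp hz' with rfl | hz'
        · exact Finset.mem_insert_self _ _
        rcases Finset.mem_insert.mp hz' with rfl | hz'
        · exact Finset.mem_insert_of_mem (Finset.mem_insert_self _ _)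
        · exact Finset.mem_insert_of_mem (Finset.mem_insert_of_mem
            (Finset.mem_erase.mpr ⟨hzs, hz'⟩))
      · refine down hK ha ?_
        intro z hz
        have hz' := hτ hz
        rcases Finset.mem_insert.mp hz' with rfl | hz'
        · exact Finset.mem_insert_self _ _
        rcases Finset.mem_insert.mp hz' with rfl | hz'
        · exact absurd hz hbτ
        · exact Finset.mem_insert_of_mem hz'
    · refine down hK hbf ?_
      intro z hz
      have hz' := hτ hz
      rcases Finset.mem_insert.mp hz' with rfl | hz'
      · exact absurd hz haτ
      · exact hz'

/-! ### Second facet through a ridge -/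

theorem exists_second_facet {K : Set (Finset V)} {d : ℕ}
    (hridge : ∀ σ ∈ K, σ.card = d → {F : Finset V | IsFacet K F ∧ σ ⊆ F}.ncard = 2)
    {σ : Finset V} (hσ : σ ∈ K) (hc : σ.card = d) {F : Finset V} (hF : IsFacet K F)
    (hσF : σ ⊆ F) : ∃ G, IsFacet K G ∧ σ ⊆ G ∧ G ≠ F := by
  have h2 := hridge σ hσ hc
  obtain ⟨p, q, hpq, heq⟩ := Set.ncard_eq_two.mp h2
  have hFin : F ∈ {F : Finset V | IsFacet K F ∧ σ ⊆ F} := ⟨hF, hσF⟩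
  rw [heq] at hFin
  rcases hFin with rfl | rfl
  · have hq : q ∈ {F : Finset V | IsFacet K F ∧ σ ⊆ F} := by rw [heq]; simp
    exact ⟨q, hq.1, hq.2, Ne.symm hpq⟩
  · have hp : p ∈ {F : Finset V | IsFacet K F ∧ σ ⊆ F} := by rw [heq]; simp
    exact ⟨p, hp.1, hp.2, hpq⟩

theorem facet_eq_insert {K : Set (Finset V)} {d : ℕ} (hp : PureCplx K d)
    {σ G : Finset V} (hG : IsFacet K G) (hσG : σ ⊆ G) (hc : σ.card = d) :
    ∃ b, b ∉ σ ∧ G = insert b σ := by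
  have h1 : (G \ σ).card = 1 := by
    rw [Finset.card_sdiff_of_subset hσG, hp.2 G hG, hc]
    omega
  obtain ⟨b, hbb⟩ := Finset.card_eq_one.mp h1
  have hbσ : b ∉ σ := by
    have : b ∈ G \ σ := hbb ▸ Finset.mem_singleton_self b
    exact (Finset.mem_sdiff.mp this).2
  refine ⟨b, hbσ, ?_⟩
  have h2 := Finset.sdiff_union_of_subset hσG
  rw [hbb] at h2
  rw [← h2]
  ext z; simp

end BannerAux
namespace BannerAux

open Finset

variable {V : Type*} [DecidableEq V]

/-! ### Finite neighborhoods and counting -/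

noncomputable def vertsFin (K : Set (Finset V)) [Fintype V] : Finset V :=
  (Set.toFinite (verts K)).toFinset

noncomputable def NFin (K : Set (Finset V)) [Fintype V] (x : V) : Finset V :=
  (Set.toFinite {z | z ≠ x ∧ ({x, z} : Finset V) ∈ K}).toFinset

@[simp] theorem mem_vertsFin [Fintype V] {K : Set (Finset V)} {x : V} :
    x ∈ vertsFin K ↔ IsVertex K x := by
  simp [vertsFin, Set.Finite.mem_toFinset, verts]

@[simp] theorem mem_NFin [Fintype V] {K : Set (Finset V)} {x z : V} :
    z ∈ NFin K x ↔ z ≠ x ∧ ({x, z} : Finset V) ∈ K := by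
  simp [NFin, Set.Finite.mem_toFinset]

theorem NFin_comm [Fintype V] {K : Set (Finset V)} {x z : V} :
    z ∈ NFin K x ↔ x ∈ NFin K z := by
  simp only [mem_NFin]
  constructor
  · rintro ⟨h1, h2⟩; exact ⟨h1.symm, by rwa [Finset.pair_comm]⟩
  · rintro ⟨h1, h2⟩; exact ⟨h1.symm, by rwa [Finset.pair_comm]⟩

theorem not_mem_NFin_self [Fintype V] {K : Set (Finset V)} {x : V} : x ∉ NFin K x := by
  simp

theorem NFin_subset_vertsFin [Fintype V] {K : Set (Finset V)} (hK : IsComplex K) {x : V} :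
    NFin K x ⊆ vertsFin K := by
  intro z hz
  rw [mem_NFin] at hz
  rw [mem_vertsFin]
  exact down hK hz.2 (by simp)

theorem vertsFin_link [Fintype V] {K : Set (Finset V)} {x : V} :
    vertsFin (link K {x}) = NFin K x := by
  ext z
  rw [mem_vertsFin, mem_NFin]
  have := verts_link_singleton (K := K) (x := x)
  have hz : IsVertex (link K {x}) z ↔ z ∈ verts (link K {x}) := Iff.rfl
  rw [hz, this]
  rfl

theorem verts_link_eq_coe_NFin [Fintype V] {K : Set (Finset V)} {x : V} :
    verts (link K {x}) = (↑(NFin K x) : Set V) := by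
  rw [← vertsFin_link]
  simp [vertsFin, Set.Finite.coe_toFinset]

theorem card_inter_insert [Fintype V] {K : Set (Finset V)} (w a : V) {X : Finset V}
    (haX : a ∉ X) :
    (NFin K w ∩ insert a X).card = (NFin K w ∩ X).card + if a ∈ NFin K w then 1 else 0 := by
  by_cases haw : a ∈ NFin K w
  · have h : NFin K w ∩ insert a X = insert a (NFin K w ∩ X) := by
      ext z
      simp only [Finset.mem_inter, Finset.mem_insert]
      constructor
      · rintro ⟨hz, rfl | hz2⟩
        · exact Or.inl rfl
        · exact Or.inr ⟨hz, hz2⟩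
      · rintro (rfl | ⟨hz1, hz2⟩)
        · exact ⟨haw, Or.inl rfl⟩
        · exact ⟨hz1, Or.inr hz2⟩
    rw [h, Finset.card_insert_of_notMem (fun hcon => haX (Finset.mem_inter.mp hcon).2),
      if_pos haw]
  · have h : NFin K w ∩ insert a X = NFin K w ∩ X := by
      ext z
      simp only [Finset.mem_inter, Finset.mem_insert]
      constructor
      · rintro ⟨hz, rfl | hz2⟩
        · exact absurd hz haw
        · exact ⟨hz, hz2⟩
      · rintro ⟨h1, h2⟩; exact ⟨h1, Or.inr h2⟩
    rw [h, if_neg haw, add_zero]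

theorem sum_ite_nfin [Fintype V] {K : Set (Finset V)} (a : V) (X : Finset V) :
    ∑ w ∈ X, (if a ∈ NFin K w then 1 else 0) = (NFin K a ∩ X).card := by
  classical
  have h1 : ∀ w ∈ X, (if a ∈ NFin K w then 1 else 0) = (if w ∈ NFin K a then 1 else 0) := by
    intro w _
    by_cases h : a ∈ NFin K w
    · rw [if_pos h, if_pos (NFin_comm.mp h)]
    · rw [if_neg h, if_neg (fun hc => h (NFin_comm.mp hc))]
  rw [Finset.sum_congr rfl h1, ← Finset.card_filter]
  rw [Finset.filter_mem_eq_inter, Finset.inter_comm]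

theorem handshake [Fintype V] (K : Set (Finset V)) (X : Finset V) :
    Even (∑ w ∈ X, (NFin K w ∩ X).card) := by
  classical
  induction X using Finset.induction_on with
  | empty => simp
  | @insert a X haX ih =>
    rw [Finset.sum_insert haX]
    have h1 : NFin K a ∩ insert a X = NFin K a ∩ X := by
      ext z
      simp only [Finset.mem_inter, Finset.mem_insert, mem_NFin]
      constructor
      · rintro ⟨hz, rfl | hz2⟩
        · exact absurd rfl hz.1
        · exact ⟨hz, hz2⟩
      · rintro ⟨hz, hz2⟩; exact ⟨hz, Or.inr hz2⟩
    have h2 : ∀ w ∈ X, (NFin K w ∩ insert a X).card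
        = (NFin K w ∩ X).card + if a ∈ NFin K w then 1 else 0 :=
      fun w _ => card_inter_insert w a haX
    rw [Finset.sum_congr rfl h2, Finset.sum_add_distrib, h1, sum_ite_nfin]
    obtain ⟨c, hc⟩ := ih
    exact ⟨(NFin K a ∩ X).card + c, by omega⟩

theorem handshake2 [Fintype V] (K : Set (Finset V)) (A B : Finset V) :
    ∑ w ∈ A, (NFin K w ∩ B).card = ∑ z ∈ B, (NFin K z ∩ A).card := by
  classical
  induction A using Finset.induction_on with
  | empty => simp
  | @insert a A haA ih =>
    rw [Finset.sum_insert haA]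
    have h2 : ∀ z ∈ B, (NFin K z ∩ insert a A).card
        = (NFin K z ∩ A).card + if a ∈ NFin K z then 1 else 0 :=
      fun z _ => card_inter_insert z a haA
    rw [Finset.sum_congr rfl h2, Finset.sum_add_distrib, ← ih, sum_ite_nfin,
      Finset.inter_comm]
    exact Nat.add_comm _ _

/-! ### One-dimensional normal pseudomanifolds -/

theorem deg_two [Fintype V] {L : Set (Finset V)} (hc : IsComplex L) (hp : PureCplx L 1)
    (hridge : ∀ σ ∈ L, σ.card = 1 → {F : Finset V | IsFacet L F ∧ σ ⊆ F}.ncard = 2)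
    {x : V} (hx : IsVertex L x) : (NFin L x).card = 2 := by
  have h2 := hridge {x} hx (Finset.card_singleton x)
  obtain ⟨F₁, F₂, hne, heq⟩ := Set.ncard_eq_two.mp h2
  have hF₁ : F₁ ∈ {F : Finset V | IsFacet L F ∧ {x} ⊆ F} := by rw [heq]; simp
  have hF₂ : F₂ ∈ {F : Finset V | IsFacet L F ∧ {x} ⊆ F} := by rw [heq]; simp
  obtain ⟨y₁, hy₁, he₁⟩ := facet_eq_insert hp hF₁.1 hF₁.2 (Finset.card_singleton x)
  obtain ⟨y₂, hy₂, he₂⟩ := facet_eq_insert hp hF₂.1 hF₂.2 (Finset.card_singleton x)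
  have hy₁x : y₁ ≠ x := by simpa using hy₁
  have hy₂x : y₂ ≠ x := by simpa using hy₂
  have hy12 : y₁ ≠ y₂ := by
    intro h
    exact hne (by rw [he₁, he₂, h])
  have hNeq : NFin L x = {y₁, y₂} := by
    ext z
    simp only [mem_NFin, Finset.mem_insert, Finset.mem_singleton]
    constructor
    · rintro ⟨hzx, hzL⟩
      obtain ⟨G, hG, hsubG⟩ := hp.1 _ hzL
      have hcard2 : ({x, z} : Finset V).card = 2 := by
        rw [Finset.card_insert_of_notMem (by simp [Ne.symm hzx]), Finset.card_singleton]
      have hGeq : ({x, z} : Finset V) = G :=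
        Finset.eq_of_subset_of_card_le hsubG (by rw [hp.2 G hG, hcard2])
      have hGin : G ∈ {F : Finset V | IsFacet L F ∧ {x} ⊆ F} := by
        refine ⟨hG, ?_⟩
        rw [← hGeq]
        simp
      rw [heq] at hGin
      rcases hGin with rfl | rfl
      · left
        have : z ∈ insert y₁ ({x} : Finset V) := by rw [← he₁, ← hGeq]; simp
        rcases Finset.mem_insert.mp this with h | h
        · exact h
        · exact absurd (Finset.mem_singleton.mp h) hzx
      · right
        have : z ∈ insert y₂ ({x} : Finset V) := by rw [← he₂, ← hGeq]; simp
        rcases Finset.mem_insert.mp this with h | h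
        · exact h
        · exact absurd (Finset.mem_singleton.mp h) hzx
    · rintro (rfl | rfl)
      · refine ⟨hy₁x, ?_⟩
        have : ({x, z} : Finset V) = insert z ({x} : Finset V) := by
          ext a; simp [or_comm]
        rw [this, ← he₁]
        exact hF₁.1.1
      · refine ⟨hy₂x, ?_⟩
        have : ({x, z} : Finset V) = insert z ({x} : Finset V) := by
          ext a; simp [or_comm]
        rw [this, ← he₂]
        exact hF₂.1.1
  rw [hNeq, Finset.card_insert_of_notMem (by simp [hy12]), Finset.card_singleton]

theorem no_triangle {L : Set (Finset V)} (hc : IsComplex L)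
    (hb2 : ¬ ContainsSimplexBoundary L 1) {x y z : V}
    (hxy : ({x, y} : Finset V) ∈ L) (hxz : ({x, z} : Finset V) ∈ L)
    (hyz : ({y, z} : Finset V) ∈ L) (h1 : x ≠ y) (h2 : x ≠ z) (h3 : y ≠ z) : False := by
  apply hb2
  refine ⟨{x, y, z}, ?_, ?_⟩
  · rw [Finset.card_insert_of_notMem (by simp [h1, h2]),
      Finset.card_insert_of_notMem (by simp [h3]), Finset.card_singleton]
  · intro τ hτ hne
    obtain ⟨w, hw, hwτ⟩ : ∃ w ∈ ({x, y, z} : Finset V), w ∉ τ := by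
      by_contra hcon
      push_neg at hcon
      exact hne (Finset.Subset.antisymm hτ hcon)
    have hsub : ∀ a ∈ τ, a ∈ ({x, y, z} : Finset V) ∧ a ≠ w := by
      intro a ha
      exact ⟨hτ ha, fun h => hwτ (h ▸ ha)⟩
    rcases Finset.mem_insert.mp hw with rfl | hw
    · refine down hc hyz ?_
      intro a ha
      obtain ⟨ha1, ha2⟩ := hsub a ha
      simp only [Finset.mem_insert, Finset.mem_singleton] at ha1 ⊢
      tauto
    · rcases Finset.mem_insert.mp hw with rfl | hw
      · refine down hc hxz ?_
        intro a ha
        obtain ⟨ha1, ha2⟩ := hsub a ha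
        simp only [Finset.mem_insert, Finset.mem_singleton] at ha1 ⊢
        tauto
      · rw [Finset.mem_singleton] at hw
        subst hw
        refine down hc hxy ?_
        intro a ha
        obtain ⟨ha1, ha2⟩ := hsub a ha
        simp only [Finset.mem_insert, Finset.mem_singleton] at ha1 ⊢
        tauto

theorem four_verts [Fintype V] {L : Set (Finset V)} (hc : IsComplex L) (hp : PureCplx L 1)
    (hridge : ∀ σ ∈ L, σ.card = 1 → {F : Finset V | IsFacet L F ∧ σ ⊆ F}.ncard = 2)
    (hb : Banner L 1) : 4 ≤ (vertsFin L).card := by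
  obtain ⟨F, hF, _⟩ := hp.1 ∅ (empty_mem hc)
  obtain ⟨a, b, hab, hFe⟩ := Finset.card_eq_two.mp (hp.2 F hF)
  subst hFe
  have habL : ({a, b} : Finset V) ∈ L := hF.1
  have hva : IsVertex L a := vertex_of_mem hc habL (by simp)
  have hvb : IsVertex L b := vertex_of_mem hc habL (by simp)
  have hNa := deg_two hc hp hridge hva
  have hNb := deg_two hc hp hridge hvb
  have hbNa : b ∈ NFin L a := mem_NFin.mpr ⟨hab.symm, habL⟩
  have haNb : a ∈ NFin L b := mem_NFin.mpr ⟨hab, by rwa [Finset.pair_comm]⟩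
  obtain ⟨c, hcNa, hcb⟩ := Finset.exists_mem_ne (by omega : 1 < (NFin L a).card) b
  obtain ⟨d, hdNb, hda⟩ := Finset.exists_mem_ne (by omega : 1 < (NFin L b).card) a
  have hca : c ≠ a := (mem_NFin.mp hcNa).1
  have hdb : d ≠ b := (mem_NFin.mp hdNb).1
  have hacL : ({a, c} : Finset V) ∈ L := (mem_NFin.mp hcNa).2
  have hbdL : ({b, d} : Finset V) ∈ L := (mem_NFin.mp hdNb).2
  have hdc : d ≠ c := by
    rintro rfl
    exact no_triangle hc hb.2 habL hacL hbdL hab (Ne.symm hca) (Ne.symm hcb)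
  have hvc : IsVertex L c := vertex_of_mem hc hacL (by simp)
  have hvd : IsVertex L d := vertex_of_mem hc hbdL (by simp)
  have hsub : ({a, b, c, d} : Finset V) ⊆ vertsFin L := by
    intro z hz
    rw [mem_vertsFin]
    simp only [Finset.mem_insert, Finset.mem_singleton] at hz
    rcases hz with rfl | rfl | rfl | rfl
    · exact hva
    · exact hvb
    · exact hvc
    · exact hvd
  have hcard : ({a, b, c, d} : Finset V).card = 4 := by
    rw [Finset.card_insert_of_notMem (by simp [hab, Ne.symm hca, Ne.symm hda]),
      Finset.card_insert_of_notMem (by simp [Ne.symm hcb, Ne.symm hdb]),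
      Finset.card_insert_of_notMem (by simp [Ne.symm hdc]), Finset.card_singleton]
  calc 4 = ({a, b, c, d} : Finset V).card := hcard.symm
    _ ≤ (vertsFin L).card := Finset.card_le_card hsub

end BannerAux
namespace BannerAux

open Finset

variable {V : Type*} [DecidableEq V]

/-- Removing a single vertex or the two endpoints of an edge from a connected complex
all of whose vertices have exactly two neighbours leaves it connected. -/
theorem conn2 [Fintype V] {L : Set (Finset V)} (hc : IsComplex L)
    (hdeg : ∀ z, IsVertex L z → (NFin L z).card = 2)
    (hconn : ∀ u ∈ verts L, ∀ v ∈ verts L, ReachOn (skeleton L) (verts L) u v)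
    (D : Finset V)
    (hD : (∃ x, IsVertex L x ∧ D = {x}) ∨
          (∃ x y, x ≠ y ∧ ({x, y} : Finset V) ∈ L ∧ D = {x, y})) :
    ∀ u, u ∈ verts L → u ∉ D → ∀ v, v ∈ verts L → v ∉ D →
      ReachOn (skeleton L) (verts L \ ↑D) u v := by
  classical
  intro u hu huD v hv hvD
  by_contra hcon
  have hmemU : ∀ z, z ∈ vertsFin L \ D ↔ z ∈ verts L \ ↑D := by
    intro z
    rw [Finset.mem_sdiff, Set.mem_diff, mem_vertsFin, Finset.mem_coe]
    rfl
  set C : V → Finset V := fun w =>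
    (vertsFin L \ D).filter (fun z => ReachOn (skeleton L) (verts L \ ↑D) w z) with hC
  have hCsub : ∀ w, C w ⊆ vertsFin L \ D := fun w => Finset.filter_subset _ _
  have hCclosed : ∀ w z t, z ∈ C w → t ∈ NFin L z → t ∉ D → t ∈ C w := by
    intro w z t hz ht htD
    obtain ⟨htNe, htL⟩ := mem_NFin.mp ht
    have htv : IsVertex L t := down hc htL (by simp)
    have htU : t ∈ verts L \ ↑D := ⟨htv, by rwa [Finset.mem_coe]⟩
    have hzU : z ∈ verts L \ ↑D := (hmemU z).mp (hCsub w hz)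
    have hadj : (skeleton L).Adj z t := ⟨htNe.symm, htL⟩
    exact Finset.mem_filter.mpr ⟨(hmemU t).mpr htU,
      ((Finset.mem_filter.mp hz).2).trans (ReachOn.single ⟨hadj, hzU, htU⟩)⟩
  have hw_self : ∀ w, w ∈ verts L \ ↑D → w ∈ C w :=
    fun w hwU => Finset.mem_filter.mpr ⟨(hmemU w).mpr hwU, ReachOn.rfl⟩
  have hdegC : ∀ w, ∀ z ∈ C w, NFin L z ∩ C w = NFin L z ∩ (vertsFin L \ D) := by
    intro w z hz
    apply Finset.Subset.antisymm
    · exact Finset.inter_subset_inter (Finset.Subset.refl _) (hCsub w)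
    · intro t htmem
      obtain ⟨htN, htU⟩ := Finset.mem_inter.mp htmem
      have htD : t ∉ D := (Finset.mem_sdiff.mp htU).2
      exact Finset.mem_inter.mpr ⟨htN, hCclosed w z t hz htN htD⟩
  have hDsubverts : ∀ x ∈ D, IsVertex L x := by
    rcases hD with ⟨x, hx, rfl⟩ | ⟨x, y, hxy, hxyL, rfl⟩
    · intro z hz
      rw [Finset.mem_singleton] at hz
      subst hz; exact hx
    · intro z hz
      rcases Finset.mem_insert.mp hz with rfl | hz
      · exact vertex_of_mem hc hxyL (by simp)
      · rw [Finset.mem_singleton] at hz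
        subst hz; exact vertex_of_mem hc hxyL (by simp)
  have hpart : ∀ z, IsVertex L z →
      (NFin L z ∩ (vertsFin L \ D)).card + (NFin L z ∩ D).card = 2 := by
    intro z hz
    have hsplit : NFin L z ∩ (vertsFin L \ D) = (NFin L z) \ D := by
      ext t
      simp only [Finset.mem_inter, Finset.mem_sdiff]
      constructor
      · rintro ⟨h1, _, h3⟩; exact ⟨h1, h3⟩
      · rintro ⟨h1, h2⟩
        exact ⟨h1, NFin_subset_vertsFin hc h1, h2⟩
    rw [hsplit, Finset.card_sdiff_add_card_inter, hdeg z hz]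
  have hsumD : ∑ z ∈ vertsFin L \ D, (NFin L z ∩ D).card = 2 := by
    rw [handshake2]
    rcases hD with ⟨x, hx, rfl⟩ | ⟨x, y, hxy, hxyL, rfl⟩
    · rw [Finset.sum_singleton]
      have h0 : (NFin L x ∩ ({x} : Finset V)).card = 0 := by
        rw [Finset.card_eq_zero, Finset.eq_empty_iff_forall_notMem]
        intro t htmem
        obtain ⟨ht1, ht2⟩ := Finset.mem_inter.mp htmem
        rw [Finset.mem_singleton] at ht2
        subst ht2
        exact (mem_NFin.mp ht1).1 rfl
      have := hpart x hx
      omega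
    · rw [Finset.sum_pair hxy]
      have hxv := hDsubverts x (by simp)
      have hyv := hDsubverts y (by simp)
      have hyNx : y ∈ NFin L x := mem_NFin.mpr ⟨hxy.symm, hxyL⟩
      have hxNy : x ∈ NFin L y := NFin_comm.mp hyNx
      have h1 : (NFin L x ∩ ({x, y} : Finset V)).card = 1 := by
        have heq : NFin L x ∩ ({x, y} : Finset V) = {y} := by
          ext t
          simp only [Finset.mem_inter, Finset.mem_insert, Finset.mem_singleton]
          constructor
          · rintro ⟨h1, rfl | rfl⟩
            · exact absurd rfl (mem_NFin.mp h1).1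
            · rfl
          · rintro rfl
            exact ⟨hyNx, Or.inr rfl⟩
        rw [heq, Finset.card_singleton]
      have h2 : (NFin L y ∩ ({x, y} : Finset V)).card = 1 := by
        have heq : NFin L y ∩ ({x, y} : Finset V) = {x} := by
          ext t
          simp only [Finset.mem_inter, Finset.mem_insert, Finset.mem_singleton]
          constructor
          · rintro ⟨h1, rfl | rfl⟩
            · rfl
            · exact absurd rfl (mem_NFin.mp h1).1
          · rintro rfl
            exact ⟨hxNy, Or.inl rfl⟩
        rw [heq, Finset.card_singleton]
      have hp1 := hpart x hxv
      have hp2 := hpart y hyv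
      omega
  have hevenC : ∀ w, Even (∑ z ∈ C w, (NFin L z ∩ D).card) := by
    intro w
    have he1 := handshake L (C w)
    have he2 : ∑ z ∈ C w, (NFin L z ∩ C w).card
        = ∑ z ∈ C w, (NFin L z ∩ (vertsFin L \ D)).card :=
      Finset.sum_congr rfl (fun z hz => by rw [hdegC w z hz])
    have he3 : ∀ z ∈ C w, (NFin L z ∩ (vertsFin L \ D)).card + (NFin L z ∩ D).card = 2 := by
      intro z hz
      exact hpart z ((hmemU z).mp (hCsub w hz)).1
    have he4 : ∑ z ∈ C w, (NFin L z ∩ (vertsFin L \ D)).card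
        + ∑ z ∈ C w, (NFin L z ∩ D).card = 2 * (C w).card := by
      rw [← Finset.sum_add_distrib, Finset.sum_congr rfl he3, Finset.sum_const,
        smul_eq_mul, mul_comm]
    rw [Nat.even_iff] at he1 ⊢
    omega
  have hdisjC : Disjoint (C u) (C v) := by
    rw [Finset.disjoint_left]
    intro w hwu hwv
    exact hcon (((Finset.mem_filter.mp hwu).2).trans
      ((Finset.mem_filter.mp hwv).2).symm)
  have hle : ∑ z ∈ C u, (NFin L z ∩ D).card + ∑ z ∈ C v, (NFin L z ∩ D).card ≤ 2 := by
    rw [← Finset.sum_union hdisjC]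
    calc ∑ z ∈ C u ∪ C v, (NFin L z ∩ D).card
        ≤ ∑ z ∈ vertsFin L \ D, (NFin L z ∩ D).card :=
          Finset.sum_le_sum_of_subset (Finset.union_subset (hCsub u) (hCsub v))
      _ = 2 := hsumD
  have hzero : (∑ z ∈ C u, (NFin L z ∩ D).card = 0)
      ∨ (∑ z ∈ C v, (NFin L z ∩ D).card = 0) := by
    have h1 := hevenC u
    have h2 := hevenC v
    rw [Nat.even_iff] at h1 h2
    omega
  have huU : u ∈ verts L \ ↑D := ⟨hu, by rwa [Finset.mem_coe]⟩
  have hvU : v ∈ verts L \ ↑D := ⟨hv, by rwa [Finset.mem_coe]⟩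
  have key : ∀ w o, w ∈ verts L \ ↑D → o ∈ verts L \ ↑D →
      (∑ z ∈ C w, (NFin L z ∩ D).card = 0) → o ∈ C w := by
    intro w o hwU hoU hzeroW
    have hclosed2 : ∀ z ∈ C w, ∀ t ∈ NFin L z, t ∈ C w := by
      intro z hz t ht
      have h0 : (NFin L z ∩ D).card = 0 := Finset.sum_eq_zero_iff.mp hzeroW z hz
      have htD : t ∉ D := by
        intro htD
        have hmem : t ∈ NFin L z ∩ D := Finset.mem_inter.mpr ⟨ht, htD⟩
        rw [Finset.card_eq_zero] at h0
        rw [h0] at hmem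
        exact Finset.notMem_empty t hmem
      exact hCclosed w z t hz ht htD
    have hchain : ∀ t, ReachOn (skeleton L) (verts L) w t → t ∈ C w := by
      intro t ht
      induction ht with
      | refl => exact hw_self w hwU
      | @tail y t h1 h2 ih =>
        have htN : t ∈ NFin L y := mem_NFin.mpr ⟨(h2.1.1).symm, h2.1.2⟩
        exact hclosed2 y ih t htN
    exact hchain o (hconn w hwU.1 o hoU.1)
  rcases hzero with h0 | h0
  · exact hcon ((Finset.mem_filter.mp (key u v huU hvU h0)).2)
  · exact hcon (((Finset.mem_filter.mp (key v u hvU huU h0)).2).symm)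

end BannerAux
namespace BannerAux

open Finset

variable {V : Type*} [DecidableEq V]

theorem link_empty {K : Set (Finset V)} : link K (∅ : Finset V) = K := by
  ext τ
  simp [mem_link]

theorem complexConnected_reachOn {K : Set (Finset V)} (h : ComplexConnected K) :
    ∀ u ∈ verts K, ∀ v ∈ verts K, ReachOn (skeleton K) (verts K) u v :=
  ((induce_connected_iff (skeleton K) (verts K)).mp h).2

theorem exists_boundary {α : Type*} {r : α → α → Prop} {P : α → Prop} {a b : α}
    (h : Relation.ReflTransGen r a b) (ha : P a) (hb : ¬ P b) :
    ∃ x y, r x y ∧ P x ∧ ¬ P y := by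
  revert hb
  induction h with
  | refl => exact fun hb => absurd ha hb
  | @tail y z h1 h2 ih =>
    intro hb
    by_cases hy : P y
    · exact ⟨y, z, h2, hy, hb⟩
    · exact ih hy

theorem extract {G : SimpleGraph V} {U : Set V} {s u v : V} (hsU : s ∈ U)
    (hvs : v ≠ s) (h : ReachOn G U u v) (huU' : u ∈ U \ {s})
    (hcon : ¬ ReachOn G (U \ {s}) u v) :
    ∃ w w', G.Adj s w ∧ w ∈ U \ {s} ∧ ReachOn G (U \ {s}) u w ∧
            G.Adj s w' ∧ w' ∈ U \ {s} ∧ ReachOn G (U \ {s}) w' v := by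
  have hM : (v ∈ U \ {s} ∧ ReachOn G (U \ {s}) u v)
      ∨ (v = s ∧ ∃ w, G.Adj s w ∧ w ∈ U \ {s} ∧ ReachOn G (U \ {s}) u w)
      ∨ (∃ w w', G.Adj s w ∧ w ∈ U \ {s} ∧ ReachOn G (U \ {s}) u w ∧
          G.Adj s w' ∧ w' ∈ U \ {s} ∧ v ∈ U \ {s} ∧ ReachOn G (U \ {s}) w' v) := by
    clear hcon hvs
    induction h with
    | refl => exact Or.inl ⟨huU', ReachOn.rfl⟩
    | @tail y z h1 h2 ih =>
      rcases ih with ⟨hyU, hr⟩ | ⟨hys, w, hw1, hw2, hw3⟩ |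
          ⟨w, w', hw, hwU, hru, hw', hw'U, hyU, hr⟩
      · by_cases hzs : z = s
        · exact Or.inr (Or.inl ⟨hzs, y, (hzs ▸ h2.1).symm, hyU, hr⟩)
        · have hzU : z ∈ U \ {s} := ⟨h2.2.2, by simp [hzs]⟩
          exact Or.inl ⟨hzU, hr.trans (ReachOn.single ⟨h2.1, hyU, hzU⟩)⟩
      · have hsz : G.Adj s z := hys ▸ h2.1
        have hzs : z ≠ s := fun hh => (G.loopless.irrefl s) (hh ▸ hsz)
        have hzU : z ∈ U \ {s} := ⟨h2.2.2, by simp [hzs]⟩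
        exact Or.inr (Or.inr ⟨w, z, hw1, hw2, hw3, hsz, hzU, hzU, ReachOn.rfl⟩)
      · by_cases hzs : z = s
        · exact Or.inr (Or.inl ⟨hzs, w, hw, hwU, hru⟩)
        · have hzU : z ∈ U \ {s} := ⟨h2.2.2, by simp [hzs]⟩
          exact Or.inr (Or.inr ⟨w, w', hw, hwU, hru, hw', hw'U, hzU,
            hr.trans (ReachOn.single ⟨h2.1, hyU, hzU⟩)⟩)
  rcases hM with ⟨hvU, hr⟩ | ⟨hvs', _⟩ | ⟨w, w', h1, h2, h3, h4, h5, _, h7⟩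
  · exact absurd hr hcon
  · exact absurd hvs' hvs
  · exact ⟨w, w', h1, h2, h3, h4, h5, h7⟩

end BannerAux
namespace BannerAux

open Finset

variable {V : Type*} [DecidableEq V]

theorem mainAux [Fintype V] : ∀ (m : ℕ) (K : Set (Finset V)),
    NormalPM K (m + 1) → Banner K (m + 1) →
    (2 * (m + 1) + 2 ≤ (vertsFin K).card) ∧
    (∀ S : Finset V, S.card < 2 * (m + 1) →
      ∀ u ∈ verts K \ ↑S, ∀ v ∈ verts K \ ↑S,
        ReachOn (skeleton K) (verts K \ ↑S) u v) := by
  intro m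
  induction m with
  | zero =>
    intro K hn hb
    obtain ⟨⟨hK, hp, hridge, hsc⟩, hnorm⟩ := hn
    have hdeg : ∀ z, IsVertex K z → (NFin K z).card = 2 :=
      fun z hz => deg_two hK hp hridge hz
    have hgr : ComplexConnected K := by
      have := hnorm ∅ (empty_mem hK) (by simp)
      rwa [link_empty] at this
    have hconn := complexConnected_reachOn hgr
    constructor
    · exact four_verts hK hp hridge hb
    · intro S hS u hu v hv
      by_cases hex : ∃ x ∈ S, IsVertex K x
      · obtain ⟨x, hxS, hxv⟩ := hex
        have hSx : S = {x} := by
          have h1 : S.card ≤ 1 := by omega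
          have h2 : ({x} : Finset V) ⊆ S := Finset.singleton_subset_iff.mpr hxS
          exact (Finset.eq_of_subset_of_card_le h2 (by simpa using h1)).symm
        subst hSx
        exact conn2 hK hdeg hconn {x} (Or.inl ⟨x, hxv, rfl⟩) u hu.1
          (by simpa using hu.2) v hv.1 (by simpa using hv.2)
      · push_neg at hex
        have hsetEq : verts K \ ↑S = verts K := by
          ext z
          simp only [Set.mem_diff, Finset.mem_coe, and_iff_left_iff_imp]
          intro hz hzS
          exact hex z hzS hz
        rw [hsetEq] at hu hv ⊢
        exact hconn u hu v hv
  | succ m ih =>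
    intro K hn hb
    have hnKeep := hn
    obtain ⟨⟨hK, hp, hridge, hsc⟩, hnorm⟩ := hn
    have hlink : ∀ x, IsVertex K x →
        NormalPM (link K {x}) (m + 1) ∧ Banner (link K {x}) (m + 1) :=
      fun x hx => ⟨normalPM_link hnKeep hx, banner_link hK hb (by omega)⟩
    have hIH : ∀ x, IsVertex K x →
        (2 * (m + 1) + 2 ≤ (NFin K x).card) ∧
        (∀ S : Finset V, S.card < 2 * (m + 1) →
          ∀ u ∈ verts (link K {x}) \ ↑S, ∀ v ∈ verts (link K {x}) \ ↑S,
            ReachOn (skeleton (link K {x})) (verts (link K {x}) \ ↑S) u v) := by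
      intro x hx
      have h := ih (link K {x}) (hlink x hx).1 (hlink x hx).2
      rwa [vertsFin_link] at h
    constructor
    · -- vertex count
      obtain ⟨F, hF, _⟩ := hp.1 ∅ (empty_mem hK)
      have hFcard : F.card = m + 3 := by rw [hp.2 F hF]
      obtain ⟨x, hxF⟩ := Finset.card_pos.mp (by omega : 0 < F.card)
      have hxv : IsVertex K x := vertex_of_mem hK hF.1 hxF
      have hσK : F.erase x ∈ K := down hK hF.1 (Finset.erase_subset _ _)
      have hσcard : (F.erase x).card = m + 2 := by
        rw [Finset.card_erase_of_mem hxF, hFcard]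
        omega
      obtain ⟨G, hG, hσG, hGF⟩ := exists_second_facet hridge hσK hσcard hF
        (Finset.erase_subset _ _)
      obtain ⟨b, hbσ, hGeq⟩ := facet_eq_insert hp hG hσG hσcard
      have hFσ : F = insert x (F.erase x) := (Finset.insert_erase hxF).symm
      have hxG : x ∉ G := by
        intro hxG
        apply hGF
        apply hF.2 _ hG.1
        intro z hz
        rw [hFσ] at hz
        rcases Finset.mem_insert.mp hz with rfl | hz
        · exact hxG
        · exact hσG hz
      have hbx : b ≠ x := by
        rintro rfl
        exact hxG (by rw [hGeq]; exact Finset.mem_insert_self _ _)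
      have hnadj : ({x, b} : Finset V) ∉ K := by
        apply opp_not_adj hK hb hσK hσcard (a := x) (b := b)
        · rw [← hFσ]; exact hF.1
        · rw [← hGeq]; exact hG.1
        · exact Finset.notMem_erase _ _
        · exact hbσ
        · exact hbx.symm
      have hbv : IsVertex K b :=
        vertex_of_mem hK hG.1 (by rw [hGeq]; exact Finset.mem_insert_self _ _)
      have hbN : b ∉ NFin K x := by
        rw [mem_NFin]
        rintro ⟨h1, h2⟩
        exact hnadj h2
      have hsub : insert x (insert b (NFin K x)) ⊆ vertsFin K := by
        intro z hz
        rcases Finset.mem_insert.mp hz with rfl | hz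
        · exact mem_vertsFin.mpr hxv
        rcases Finset.mem_insert.mp hz with rfl | hz
        · exact mem_vertsFin.mpr hbv
        · exact NFin_subset_vertsFin hK hz
      have hNcard := (hIH x hxv).1
      have hc1 : (insert x (insert b (NFin K x))).card = (NFin K x).card + 2 := by
        rw [Finset.card_insert_of_notMem
          (by simp [hbx.symm, (not_mem_NFin_self : x ∉ NFin K x)]),
          Finset.card_insert_of_notMem hbN]
      have hc2 := Finset.card_le_card hsub
      omega
    · -- connectivity
      intro S hS u hu v hv
      by_contra hcon0
      have main : ∀ (n : ℕ) (T : Finset V), T.card = n → T ⊆ S →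
          (∃ u' ∈ verts K \ ↑T, ∃ v' ∈ verts K \ ↑T,
            ¬ ReachOn (skeleton K) (verts K \ ↑T) u' v') → False := by
        intro n
        induction n using Nat.strong_induction_on with
        | _ n ihn =>
        intro T hTn hTS hbad
        obtain ⟨u', hu', v', hv', hcon⟩ := hbad
        by_cases hstep : ∃ s ∈ T, ∃ a ∈ verts K \ ↑(T.erase s), ∃ b' ∈ verts K \ ↑(T.erase s),
            ¬ ReachOn (skeleton K) (verts K \ ↑(T.erase s)) a b'
        · obtain ⟨s, hsT, hbad'⟩ := hstep
          exact ihn (T.erase s).card (by rw [← hTn]; exact Finset.card_erase_lt_of_mem hsT)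
            (T.erase s) rfl ((Finset.erase_subset _ _).trans hTS) hbad'
        · push_neg at hstep
          rcases Finset.eq_empty_or_nonempty T with rfl | hTne
          · have hgrK : ComplexConnected K := by
              have h0 := hnorm ∅ (empty_mem hK) (by simp)
              rwa [link_empty] at h0
            apply hcon
            have hsetEq : verts K \ ↑(∅ : Finset V) = verts K := by simp
            rw [hsetEq]
            exact complexConnected_reachOn hgrK u' (hsetEq ▸ hu'.1 : u' ∈ verts K)
              v' (hsetEq ▸ hv'.1 : v' ∈ verts K)
          have hTvert : ∀ s ∈ T, IsVertex K s := by
            intro s hsT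
            by_contra hsv
            have hEq : verts K \ ↑(T.erase s) = verts K \ ↑T := by
              ext z
              simp only [Set.mem_diff, Finset.mem_coe, Finset.mem_erase]
              constructor
              · rintro ⟨h1, h2⟩
                refine ⟨h1, fun hzT => h2 ⟨?_, hzT⟩⟩
                rintro rfl
                exact hsv h1
              · rintro ⟨h1, h2⟩
                exact ⟨h1, fun hz => h2 hz.2⟩
            have h1 := hstep s hsT u' (by rw [hEq]; exact hu') v' (by rw [hEq]; exact hv')
            rw [hEq] at h1
            exact hcon h1
          have hTcard_le : T.card ≤ 2 * m + 3 := by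
            have := Finset.card_le_card hTS
            omega
          have hwitness : ∀ s ∈ T, ∃ w w', w ∈ NFin K s ∧ w ∈ verts K \ ↑T ∧
              ReachOn (skeleton K) (verts K \ ↑T) u' w ∧
              w' ∈ NFin K s ∧ w' ∈ verts K \ ↑T ∧
              ReachOn (skeleton K) (verts K \ ↑T) w' v' := by
            intro s hsT
            have hsv := hTvert s hsT
            have hsU : s ∈ verts K \ ↑(T.erase s) :=
              ⟨hsv, by simp⟩
            have hUeq : (verts K \ ↑(T.erase s)) \ {s} = verts K \ ↑T := by
              ext z
              simp only [Set.mem_diff, Finset.mem_coe, Finset.mem_erase,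
                Set.mem_singleton_iff]
              constructor
              · rintro ⟨⟨h1, h2⟩, h3⟩
                exact ⟨h1, fun hzT => h2 ⟨h3, hzT⟩⟩
              · rintro ⟨h1, h2⟩
                have hzs : z ≠ s := fun hh => h2 (hh ▸ hsT)
                exact ⟨⟨h1, fun hz => h2 hz.2⟩, hzs⟩
            have hu'e : u' ∈ verts K \ ↑(T.erase s) :=
              ⟨hu'.1, fun hz => hu'.2 (Finset.mem_coe.mpr
                (Finset.mem_of_mem_erase (Finset.mem_coe.mp hz)))⟩
            have hv'e : v' ∈ verts K \ ↑(T.erase s) :=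
              ⟨hv'.1, fun hz => hv'.2 (Finset.mem_coe.mpr
                (Finset.mem_of_mem_erase (Finset.mem_coe.mp hz)))⟩
            have hreach := hstep s hsT u' hu'e v' hv'e
            have hvs' : v' ≠ s := fun hh => hv'.2 (by rw [hh]; exact Finset.mem_coe.mpr hsT)
            have hu'mem : u' ∈ (verts K \ ↑(T.erase s)) \ {s} := by
              rw [hUeq]; exact hu'
            have hconT : ¬ ReachOn (skeleton K) ((verts K \ ↑(T.erase s)) \ {s}) u' v' := by
              rw [hUeq]; exact hcon
            obtain ⟨w, w', hw1, hw2, hw3, hw4, hw5, hw6⟩ :=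
              extract hsU hvs' hreach hu'mem hconT
            rw [hUeq] at hw2 hw3 hw5 hw6
            exact ⟨w, w', mem_NFin.mpr ⟨(hw1.1).symm, hw1.2⟩, hw2, hw3,
              mem_NFin.mpr ⟨(hw4.1).symm, hw4.2⟩, hw5, hw6⟩
          have htrace : ∀ s ∈ T, 2 * (m + 1) ≤ (T ∩ NFin K s).card := by
            intro s hsT
            by_contra hlt
            push_neg at hlt
            obtain ⟨w, w', hwN, hwU, hwr, hw'N, hw'U, hw'r⟩ := hwitness s hsT
            have hsv := hTvert s hsT
            have hwmem : w ∈ verts (link K {s}) \ ↑(T ∩ NFin K s) := by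
              rw [verts_link_eq_coe_NFin]
              exact ⟨Finset.mem_coe.mpr hwN, fun hz => hwU.2 (Finset.mem_coe.mpr
                (Finset.mem_inter.mp (Finset.mem_coe.mp hz)).1)⟩
            have hw'mem : w' ∈ verts (link K {s}) \ ↑(T ∩ NFin K s) := by
              rw [verts_link_eq_coe_NFin]
              exact ⟨Finset.mem_coe.mpr hw'N, fun hz => hw'U.2 (Finset.mem_coe.mpr
                (Finset.mem_inter.mp (Finset.mem_coe.mp hz)).1)⟩
            have hreach2 := (hIH s hsv).2 (T ∩ NFin K s) hlt w hwmem w' hw'mem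
            have htrans : ReachOn (skeleton K) (verts K \ ↑T) w w' := by
              refine ReachOn.mono₂ (fun a b hab => skeleton_link_le hK hab) ?_ hreach2
              intro z hz
              obtain ⟨hz1, hz2⟩ := hz
              rw [verts_link_eq_coe_NFin, Finset.mem_coe] at hz1
              refine ⟨mem_vertsFin.mp (NFin_subset_vertsFin hK hz1), ?_⟩
              intro hzT
              exact hz2 (Finset.mem_coe.mpr
                (Finset.mem_inter.mpr ⟨Finset.mem_coe.mp hzT, hz1⟩))
            exact hcon ((hwr.trans htrans).trans hw'r)
          obtain ⟨s₀, hs₀⟩ := hTne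
          have hsub0 : ∀ s ∈ T, T ∩ NFin K s ⊆ T.erase s := by
            intro s hsT z hz
            obtain ⟨hzT, hzN⟩ := Finset.mem_inter.mp hz
            exact Finset.mem_erase.mpr ⟨(mem_NFin.mp hzN).1, hzT⟩
          have hTcard : T.card = 2 * m + 3 := by
            have h1 := htrace s₀ hs₀
            have h2 := Finset.card_le_card (hsub0 s₀ hs₀)
            have h3 := Finset.card_erase_of_mem hs₀
            omega
          have hclq : ∀ s ∈ T, T.erase s = T ∩ NFin K s := by
            intro s hsT
            refine (Finset.eq_of_subset_of_card_le (hsub0 s hsT) ?_).symm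
            rw [Finset.card_erase_of_mem hsT, hTcard]
            have := htrace s hsT
            omega
          have hadjT : ∀ s ∈ T, ∀ t ∈ T, t ≠ s → ({s, t} : Finset V) ∈ K := by
            intro s hsT t htT hts
            have hmem : t ∈ T ∩ NFin K s := by
              rw [← hclq s hsT]
              exact Finset.mem_erase.mpr ⟨hts, htT⟩
            exact (mem_NFin.mp (Finset.mem_inter.mp hmem).2).2
          -- facet colouring
          have hu'T : u' ∉ T := fun h => hu'.2 (Finset.mem_coe.mpr h)
          have hv'T : v' ∉ T := fun h => hv'.2 (Finset.mem_coe.mpr h)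
          obtain ⟨Fu, hFu, hFusub⟩ := hp.1 {u'} hu'.1
          obtain ⟨Fv, hFv, hFvsub⟩ := hp.1 {v'} hv'.1
          have hPFu : ∃ z ∈ Fu, z ∉ T ∧ ReachOn (skeleton K) (verts K \ ↑T) u' z :=
            ⟨u', hFusub (by simp), hu'T, ReachOn.rfl⟩
          have hPFv : ¬ (∃ z ∈ Fv, z ∉ T ∧ ReachOn (skeleton K) (verts K \ ↑T) u' z) := by
            rintro ⟨z, hzF, hzT, hzr⟩
            apply hcon
            by_cases hzv : z = v'
            · exact hzv ▸ hzr
            · refine hzr.trans (ReachOn.single ⟨⟨hzv, pair_mem hK hFv.1 hzF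
                (hFvsub (by simp))⟩, ?_, hv'⟩)
              exact ⟨vertex_of_mem hK hFv.1 hzF, fun hc2 => hzT (Finset.mem_coe.mp hc2)⟩
          have hreachF := hsc.preconnected ⟨Fu, hFu⟩ ⟨Fv, hFv⟩
          rw [SimpleGraph.reachable_iff_reflTransGen] at hreachF
          obtain ⟨FA, FB, hadjF, hPA, hPB⟩ := exists_boundary hreachF
            (P := fun (F : {F : Finset V // IsFacet K F}) =>
              ∃ z ∈ F.1, z ∉ T ∧ ReachOn (skeleton K) (verts K \ ↑T) u' z) hPFu hPFv
          obtain ⟨hFne, hFcap⟩ := hadjF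
          have hσK : FA.1 ∩ FB.1 ∈ K := down hK FA.2.1 Finset.inter_subset_left
          have hPall : ∀ z ∈ FA.1, z ∉ T → ReachOn (skeleton K) (verts K \ ↑T) u' z := by
            obtain ⟨z₀, hz₀F, hz₀T, hz₀r⟩ := hPA
            intro z hzF hzT
            by_cases hzz : z = z₀
            · exact hzz ▸ hz₀r
            · refine hz₀r.trans (ReachOn.single ⟨⟨Ne.symm hzz,
                pair_mem hK FA.2.1 hz₀F hzF⟩, ?_, ?_⟩)
              · exact ⟨vertex_of_mem hK FA.2.1 hz₀F, fun hc2 => hz₀T (Finset.mem_coe.mp hc2)⟩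
              · exact ⟨vertex_of_mem hK FA.2.1 hzF, fun hc2 => hzT (Finset.mem_coe.mp hc2)⟩
          have hσT : FA.1 ∩ FB.1 ⊆ T := by
            intro z hzσ
            by_contra hzT
            exact hPB ⟨z, (Finset.mem_inter.mp hzσ).2, hzT,
              hPall z (Finset.mem_inter.mp hzσ).1 hzT⟩
          have hσcard : (FA.1 ∩ FB.1).card = m + 2 := hFcap
          obtain ⟨a, haσ, hAeq⟩ := facet_eq_insert hp FA.2 Finset.inter_subset_left hσcard
          obtain ⟨bb, hbσ, hBeq⟩ := facet_eq_insert hp FB.2 Finset.inter_subset_right hσcard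
          have haT : a ∉ T ∧ ReachOn (skeleton K) (verts K \ ↑T) u' a := by
            obtain ⟨z₀, hz₀F, hz₀T, hz₀r⟩ := hPA
            have hz₀a : z₀ = a := by
              have hz₀A : z₀ ∈ insert a (FA.1 ∩ FB.1) := hAeq ▸ hz₀F
              rcases Finset.mem_insert.mp hz₀A with h | h
              · exact h
              · exact absurd (hσT h) hz₀T
            exact hz₀a ▸ ⟨hz₀T, hz₀r⟩
          have hvalne : FA.1 ≠ FB.1 := fun h => hFne (Subtype.ext h)
          have hTσcard : (T \ (FA.1 ∩ FB.1)).card = m + 1 := by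
            have h := Finset.card_sdiff_of_subset hσT
            rw [hTcard, hσcard] at h
            omega
          have hfacets : ∀ w₀ ∈ T \ (FA.1 ∩ FB.1), w₀ = bb := by
            intro w₀ hw₀
            obtain ⟨hw₀T, hw₀σ⟩ := Finset.mem_sdiff.mp hw₀
            have hclique : IsCliqueIn K (insert w₀ (FA.1 ∩ FB.1)) := by
              intro p hp' q hq' hpq
              rcases Finset.mem_insert.mp hp' with rfl | hpσ
              · rcases Finset.mem_insert.mp hq' with rfl | hqσ
                · exact absurd rfl hpq
                · rw [Finset.pair_comm]
                  exact hadjT q (hσT hqσ) p hw₀T hpq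
              · rcases Finset.mem_insert.mp hq' with rfl | hqσ
                · exact hadjT p (hσT hpσ) q hw₀T (Ne.symm hpq)
                · exact pair_mem hK hσK hpσ hqσ
            have hcardT' : (insert w₀ (FA.1 ∩ FB.1)).card = (m + 1 + 1) + 1 := by
              rw [Finset.card_insert_of_notMem hw₀σ, hσcard]
            have hcrit : IsCritical K (insert w₀ (FA.1 ∩ FB.1)) :=
              ⟨w₀, Finset.mem_insert_self _ _, by rwa [Finset.erase_insert hw₀σ]⟩
            have hT'K : insert w₀ (FA.1 ∩ FB.1) ∈ K := hb.1 _ hclique hcardT' hcrit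
            have hT'f : IsFacet K (insert w₀ (FA.1 ∩ FB.1)) := facet_of_card hp hT'K hcardT'
            have h2 := hridge _ hσK (by omega : (FA.1 ∩ FB.1).card = m + 1 + 1)
            have hmem1 : FA.1 ∈ {F : Finset V | IsFacet K F ∧ FA.1 ∩ FB.1 ⊆ F} :=
              ⟨FA.2, Finset.inter_subset_left⟩
            have hmem2 : FB.1 ∈ {F : Finset V | IsFacet K F ∧ FA.1 ∩ FB.1 ⊆ F} :=
              ⟨FB.2, Finset.inter_subset_right⟩
            have hcases := ncard_two_members h2 hmem1 hmem2 hvalne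
              (insert w₀ (FA.1 ∩ FB.1)) ⟨hT'f, Finset.subset_insert _ _⟩
            rcases hcases with hEq | hEq
            · exfalso
              have hw₀a : w₀ = a := by
                have hmm : w₀ ∈ insert a (FA.1 ∩ FB.1) := by
                  rw [← hAeq, ← hEq]
                  exact Finset.mem_insert_self _ _
                rcases Finset.mem_insert.mp hmm with h | h
                · exact h
                · exact absurd h hw₀σ
              exact haT.1 (hw₀a ▸ hw₀T)
            · have hmm : w₀ ∈ insert bb (FA.1 ∩ FB.1) := by
                rw [← hBeq, ← hEq]
                exact Finset.mem_insert_self _ _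
              rcases Finset.mem_insert.mp hmm with h | h
              · exact h
              · exact absurd h hw₀σ
          have hTσsub : T \ (FA.1 ∩ FB.1) ⊆ {bb} :=
            fun z hz => Finset.mem_singleton.mpr (hfacets z hz)
          have hm0 : m = 0 := by
            have := Finset.card_le_card hTσsub
            rw [hTσcard, Finset.card_singleton] at this
            omega
          subst hm0
          have hTσeq : T \ (FA.1 ∩ FB.1) = {bb} :=
            Finset.eq_of_subset_of_card_le hTσsub
              (by rw [hTσcard, Finset.card_singleton])
          obtain ⟨s₁, s₂, hs12, hσeq⟩ := Finset.card_eq_two.mp hσcard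
          have hs₁σ : s₁ ∈ FA.1 ∩ FB.1 := by rw [hσeq]; simp
          have hs₂σ : s₂ ∈ FA.1 ∩ FB.1 := by rw [hσeq]; simp
          have hs₁T : s₁ ∈ T := hσT hs₁σ
          have hs₂T : s₂ ∈ T := hσT hs₂σ
          have hs₁v := hTvert s₁ hs₁T
          have hTeq : T = insert bb (FA.1 ∩ FB.1) := by
            have h1 := Finset.sdiff_union_of_subset hσT
            rw [hTσeq] at h1
            rw [← h1]
            ext z
            simp only [Finset.mem_union, Finset.mem_singleton, Finset.mem_insert]
          have hbbT : bb ∈ T := by rw [hTeq]; exact Finset.mem_insert_self _ _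
          have hTK : T ∈ K := by
            rw [hTeq, ← hBeq]
            exact FB.2.1
          obtain ⟨hnL, hbL⟩ := hlink s₁ hs₁v
          obtain ⟨⟨hLc, hLp, hLridge, hLsc⟩, hLnorm⟩ := hnL
          have hdegL : ∀ z, IsVertex (link K {s₁}) z → (NFin (link K {s₁}) z).card = 2 :=
            fun z hz => deg_two hLc hLp hLridge hz
          have hgrL : ComplexConnected (link K {s₁}) :=
            hnorm {s₁} hs₁v (by simp)
          have hconnL := complexConnected_reachOn hgrL
          have hs₁bb : s₁ ≠ bb := fun h => hbσ (h ▸ hs₁σ)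
          have hs₂bb : s₂ ≠ bb := fun h => hbσ (h ▸ hs₂σ)
          have hedge : ({s₂, bb} : Finset V) ∈ link K {s₁} := by
            refine ⟨?_, ?_⟩
            · rw [Finset.disjoint_singleton_right]
              simp only [Finset.mem_insert, Finset.mem_singleton]
              push_neg
              exact ⟨hs12, hs₁bb⟩
            · have hun : ({s₂, bb} : Finset V) ∪ {s₁} = T := by
                rw [hTeq, hσeq]
                ext z
                simp only [Finset.mem_union, Finset.mem_insert, Finset.mem_singleton]
                tauto
              rw [hun]
              exact hTK
          obtain ⟨w, w', hwN, hwU, hwr, hw'N, hw'U, hw'r⟩ := hwitness s₁ hs₁T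
          have hwvert : w ∈ verts (link K {s₁}) := by
            rw [verts_link_eq_coe_NFin]
            exact Finset.mem_coe.mpr hwN
          have hw'vert : w' ∈ verts (link K {s₁}) := by
            rw [verts_link_eq_coe_NFin]
            exact Finset.mem_coe.mpr hw'N
          have hwD : w ∉ ({s₂, bb} : Finset V) := by
            intro hmm
            rcases Finset.mem_insert.mp hmm with rfl | hmm
            · exact hwU.2 (Finset.mem_coe.mpr hs₂T)
            · rw [Finset.mem_singleton] at hmm
              subst hmm
              exact hwU.2 (Finset.mem_coe.mpr hbbT)
          have hw'D : w' ∉ ({s₂, bb} : Finset V) := by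
            intro hmm
            rcases Finset.mem_insert.mp hmm with rfl | hmm
            · exact hw'U.2 (Finset.mem_coe.mpr hs₂T)
            · rw [Finset.mem_singleton] at hmm
              subst hmm
              exact hw'U.2 (Finset.mem_coe.mpr hbbT)
          have hreachL := conn2 hLc hdegL hconnL {s₂, bb}
            (Or.inr ⟨s₂, bb, hs₂bb, hedge, rfl⟩) w hwvert hwD w' hw'vert hw'D
          have htrans : ReachOn (skeleton K) (verts K \ ↑T) w w' := by
            refine ReachOn.mono₂ (fun a' b' hab => skeleton_link_le hK hab) ?_ hreachL
            intro z hz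
            obtain ⟨hz1, hz2⟩ := hz
            rw [verts_link_eq_coe_NFin, Finset.mem_coe] at hz1
            refine ⟨mem_vertsFin.mp (NFin_subset_vertsFin hK hz1), ?_⟩
            intro hzT
            have hzT' := Finset.mem_coe.mp hzT
            rw [hTeq] at hzT'
            rcases Finset.mem_insert.mp hzT' with rfl | hzσ
            · exact hz2 (by simp)
            · rw [hσeq] at hzσ
              rcases Finset.mem_insert.mp hzσ with rfl | hzσ
              · exact (mem_NFin.mp hz1).1 rfl
              · rw [Finset.mem_singleton] at hzσ
                subst hzσ
                exact hz2 (by simp)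
          exact hcon ((hwr.trans htrans).trans hw'r)
      exact main S.card S rfl (Finset.Subset.refl S) ⟨u, hu, v, hv, hcon0⟩

end BannerAux
/-- The 1-skeleton of a banner normal `d`-pseudomanifold (on vertex set `V`) is
`2d`-connected. -/
theorem banner_pm_two_d_connected (K : Set (Finset V)) (d : ℕ) [Fintype V]
    (hn : NormalPM K d) (hb : Banner K d) (hvert : ∀ v : V, IsVertex K v) :
    KConnected (skeleton K) (2 * d) := by
  classical
  obtain ⟨⟨hK, hp, hridge, hsc⟩, hnorm⟩ := hn
  rcases Nat.eq_zero_or_pos d with rfl | hd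
  · -- dimension 0 is impossible for a banner pseudomanifold
    exfalso
    have h2 := hridge ∅ (BannerAux.empty_mem hK) (Finset.card_empty)
    obtain ⟨F₁, F₂, hne, heq⟩ := Set.ncard_eq_two.mp h2
    have hF₁ : F₁ ∈ {F : Finset V | IsFacet K F ∧ ∅ ⊆ F} := by rw [heq]; simp
    have hF₂ : F₂ ∈ {F : Finset V | IsFacet K F ∧ ∅ ⊆ F} := by rw [heq]; simp
    obtain ⟨a, ha⟩ := Finset.card_eq_one.mp (hp.2 F₁ hF₁.1)
    obtain ⟨b, hbb⟩ := Finset.card_eq_one.mp (hp.2 F₂ hF₂.1)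
    have hab : a ≠ b := by
      rintro rfl
      exact hne (by rw [ha, hbb])
    apply hb.2
    refine ⟨{a, b}, by rw [Finset.card_insert_of_notMem (by simp [hab]),
      Finset.card_singleton], ?_⟩
    intro τ hτ hτne
    by_cases haτ : a ∈ τ
    · by_cases hbτ : b ∈ τ
      · exfalso
        apply hτne
        refine Finset.Subset.antisymm hτ ?_
        intro z hz
        rcases Finset.mem_insert.mp hz with rfl | hz
        · exact haτ
        · rw [Finset.mem_singleton] at hz
          exact hz ▸ hbτ
      · refine BannerAux.down hK (ha ▸ hF₁.1.1) ?_
        intro z hz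
        rcases Finset.mem_insert.mp (hτ hz) with rfl | h
        · simp
        · rw [Finset.mem_singleton] at h
          exact absurd (h ▸ hz) hbτ
    · refine BannerAux.down hK (hbb ▸ hF₂.1.1) ?_
      intro z hz
      rcases Finset.mem_insert.mp (hτ hz) with rfl | h
      · exact absurd hz haτ
      · rw [Finset.mem_singleton] at h
        exact h ▸ (Finset.mem_singleton_self b)
  · obtain ⟨m, rfl⟩ := Nat.exists_eq_add_of_le' hd
    have hmain := BannerAux.mainAux m K ⟨⟨hK, hp, hridge, hsc⟩, hnorm⟩ hb
    have hvertsEq : BannerAux.verts K = Set.univ := by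
      ext z; simp [BannerAux.verts, hvert z]
    have hvertsFinEq : BannerAux.vertsFin K = Finset.univ := by
      ext z; simp [BannerAux.mem_vertsFin, hvert z]
    have hcardV : 2 * (m + 1) + 2 ≤ Fintype.card V := by
      have h1 := hmain.1
      rwa [hvertsFinEq, Finset.card_univ] at h1
    constructor
    · omega
    · intro S hS
      rw [BannerAux.induce_connected_iff]
      have hUeq : (↑S : Set V)ᶜ = BannerAux.verts K \ ↑S := by
        rw [hvertsEq, Set.compl_eq_univ_diff]
      constructor
      · obtain ⟨z, hz⟩ : ∃ z, z ∉ S := by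
          by_contra hcon
          push_neg at hcon
          have : S = Finset.univ := Finset.eq_univ_iff_forall.mpr hcon
          rw [this, Finset.card_univ] at hS
          omega
        exact ⟨z, by simp [hz]⟩
      · intro a ha b hbb
        rw [hUeq] at ha hbb ⊢
        exact hmain.2 S hS a ha b hbb
end
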